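/- arXiv:2306.00376 — 7 statements merged into one kernel-verified Lean document; each statement's English description precedes it below -/
import Mathlib

section
/- Let f: ℝ → ℝ be continuously differentiable and let u₀, c₀ ∈ ℝ. Suppose that for every n ∈ ℕ there exist cₙ, λₙ ∈ ℝ and a nonconstant, periodic, twice continuously differentiable function uₙ: ℝ → ℝ satisfying uₙ''(x) + f(uₙ(x)) − cₙ·uₙ(x) − λₙ = 0 for all x ∈ ℝ, and that sup_{x∈ℝ} |uₙ(x) − u₀| → 0 and cₙ → c₀ as n → ∞. Then f'(u₀) − c₀ ≥ 0. -/
open Real Filter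
open Set

/-- At a global maximum of a `C²` function, the second derivative is nonpositive. -/
lemma second_deriv_nonpos_of_max {u : ℝ → ℝ} (hu : ContDiff ℝ 2 u) {a : ℝ}
    (hmax : ∀ x, u x ≤ u a) : deriv (deriv u) a ≤ 0 := by
  have hu2 : ContDiff ℝ (1 + 1) u := by exact_mod_cast hu
  have hdu : ContDiff ℝ 1 (deriv u) := (contDiff_succ_iff_deriv.mp hu2).2.2
  have hcont : Continuous (deriv (deriv u)) := hdu.continuous_deriv le_rfl
  by_contra h
  push_neg at h
  -- positive second derivative on a ball around `a`
  have hopen : IsOpen ((deriv (deriv u)) ⁻¹' Ioi 0) := isOpen_Ioi.preimage hcont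
  obtain ⟨δ, hδ0, hball⟩ := Metric.isOpen_iff.mp hopen a h
  have hda : deriv u a = 0 := by
    have : IsLocalMax u a := Filter.Eventually.of_forall hmax
    exact this.deriv_eq_zero
  have hlt : a < a + δ / 2 := by linarith
  -- `deriv u` is strictly monotone on `[a, a + δ/2]`
  have hmono : StrictMonoOn (deriv u) (Icc a (a + δ / 2)) := by
    apply strictMonoOn_of_deriv_pos (convex_Icc _ _) hdu.continuous.continuousOn
    intro x hx
    rw [interior_Icc] at hx
    exact hball (by rw [Metric.mem_ball, Real.dist_eq, abs_lt]; constructor <;>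
      [linarith [hx.1]; linarith [hx.2]])
  have hdpos : ∀ x ∈ Ioo a (a + δ / 2), 0 < deriv u x := by
    intro x hx
    have := hmono (left_mem_Icc.mpr hlt.le) ⟨hx.1.le, hx.2.le⟩ hx.1
    rwa [hda] at this
  have hmono2 : StrictMonoOn u (Icc a (a + δ / 2)) := by
    apply strictMonoOn_of_deriv_pos (convex_Icc _ _)
      (hu.continuous.continuousOn)
    intro x hx
    rw [interior_Icc] at hx
    exact hdpos x hx
  have := hmono2 (left_mem_Icc.mpr hlt.le) (right_mem_Icc.mpr hlt.le) hlt
  exact absurd (hmax (a + δ / 2)) (not_le.mpr this)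

/-- Necessity of `f'(u₀) - c₀ ≥ 0` for the existence of a family of nonconstant
periodic traveling-wave profiles of gKdV converging uniformly to the constant state `u₀`
with speeds converging to `c₀`. -/
theorem necessary_condition_small_amplitude_waves
    (f : ℝ → ℝ) (hf : ContDiff ℝ 1 f)
    (u₀ c₀ : ℝ)
    (c lam : ℕ → ℝ) (u : ℕ → ℝ → ℝ)
    (hreg : ∀ n : ℕ, ContDiff ℝ 2 (u n))
    (hnonconst : ∀ n : ℕ, ∃ x y : ℝ, u n x ≠ u n y)
    (hper : ∀ n : ℕ, ∃ T > 0, Function.Periodic (u n) T)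
    (hode : ∀ n : ℕ, ∀ x : ℝ,
      deriv (deriv (u n)) x + f (u n x) - c n * u n x - lam n = 0)
    (hconv : ∀ ε > 0, ∃ N : ℕ, ∀ n ≥ N, ∀ x : ℝ, |u n x - u₀| ≤ ε)
    (hc : Tendsto c atTop (nhds c₀)) :
    deriv f u₀ - c₀ ≥ 0 := by
  by_contra hneg
  push_neg at hneg
  set ε := (c₀ - deriv f u₀) / 3 with hεdef
  have hε0 : 0 < ε := by rw [hεdef]; linarith
  -- continuity of `deriv f` at `u₀`
  have hdf : Continuous (deriv f) := hf.continuous_deriv le_rfl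
  obtain ⟨δ, hδ0, hδ⟩ : ∃ δ > 0, ∀ v : ℝ, |v - u₀| ≤ δ →
      |deriv f v - deriv f u₀| < ε := by
    obtain ⟨δ, hδ0, H⟩ := Metric.continuous_iff.mp hdf u₀ ε hε0
    refine ⟨δ / 2, by linarith, fun v hv => ?_⟩
    have := H v (by rw [Real.dist_eq]; linarith)
    rwa [Real.dist_eq] at this
  obtain ⟨N₁, hN₁⟩ := hconv δ hδ0
  obtain ⟨N₂, hN₂⟩ := (Metric.tendsto_atTop.mp hc) ε hε0
  set n := max N₁ N₂ with hn
  obtain ⟨T, hT0, hTper⟩ := hper n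
  have hcontu : Continuous (u n) := (hreg n).continuous
  have hne : (Icc (0:ℝ) T).Nonempty := ⟨0, le_refl 0, hT0.le⟩
  obtain ⟨a, _, hamax⟩ := isCompact_Icc.exists_isMaxOn hne hcontu.continuousOn
  obtain ⟨b, _, hbmin⟩ := isCompact_Icc.exists_isMinOn hne hcontu.continuousOn
  -- global max / min
  have hMax : ∀ x, u n x ≤ u n a := by
    intro x
    obtain ⟨y, hy, hxy⟩ := hTper.exists_mem_Ico₀ hT0 x
    rw [hxy]
    exact hamax ⟨hy.1, hy.2.le⟩
  have hMin : ∀ x, u n b ≤ u n x := by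
    intro x
    obtain ⟨y, hy, hxy⟩ := hTper.exists_mem_Ico₀ hT0 x
    rw [hxy]
    exact hbmin ⟨hy.1, hy.2.le⟩
  set m := u n b with hm
  set M := u n a with hM
  have hmM : m < M := by
    rcases lt_or_eq_of_le (hMin a) with h | h
    · exact h
    · exfalso
      obtain ⟨x, y, hxy⟩ := hnonconst n
      have hx : u n x = m := le_antisymm (by rw [h]; exact hMax x) (hMin x)
      have hy : u n y = m := le_antisymm (by rw [h]; exact hMax y) (hMin y)
      exact hxy (hx.trans hy.symm)
  -- second derivative signs
  have hsecMax : deriv (deriv (u n)) a ≤ 0 := second_deriv_nonpos_of_max (hreg n) hMax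
  have hsecMin : 0 ≤ deriv (deriv (u n)) b := by
    have hneg2 : ContDiff ℝ 2 (fun x => -(u n x)) := (hreg n).neg
    have h1 : (deriv fun x => -(u n x)) = fun x => -(deriv (u n) x) := by
      funext x; exact deriv.neg
    have h2 : deriv (deriv fun x => -(u n x)) b = -(deriv (deriv (u n)) b) := by
      rw [h1]; exact deriv.neg
    have := second_deriv_nonpos_of_max hneg2 (fun x => neg_le_neg (hMin x))
    rw [h2] at this
    linarith
  -- evaluate the ODE at the max and min
  have hMl : f M - c n * M - lam n ≥ 0 := by
    have := hode n a
    simp only [← hM] at this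
    linarith
  have hml : f m - c n * m - lam n ≤ 0 := by
    have := hode n b
    simp only [← hm] at this
    linarith
  -- mean value theorem for g v = f v - c n * v on [m, M]
  have hgc : ContinuousOn (fun v => f v - c n * v) (Icc m M) :=
    (hf.continuous.sub (continuous_const.mul continuous_id)).continuousOn
  have hgd : ∀ v ∈ Ioo m M,
      HasDerivAt (fun v => f v - c n * v) (deriv f v - c n) v := by
    intro v _
    have h1 : HasDerivAt f (deriv f v) v := (hf.differentiable one_ne_zero v).hasDerivAt
    have h2 : HasDerivAt (fun v : ℝ => c n * v) (c n) v := by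
      simpa using (hasDerivAt_id v).const_mul (c n)
    exact h1.sub h2
  obtain ⟨ξ, hξmem, hξ⟩ := exists_hasDerivAt_eq_slope (fun v => f v - c n * v)
    (fun v => deriv f v - c n) hmM hgc hgd
  have hslope : 0 ≤ deriv f ξ - c n := by
    rw [hξ]
    apply div_nonneg _ (by linarith)
    linarith
  -- ξ is close to u₀
  have hMu : |M - u₀| ≤ δ := hN₁ n (le_max_left _ _) a
  have hmu : |m - u₀| ≤ δ := hN₁ n (le_max_left _ _) b
  have hξu : |ξ - u₀| ≤ δ := by
    rw [abs_le] at hMu hmu ⊢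
    exact ⟨by linarith [hξmem.1], by linarith [hξmem.2]⟩
  have h1 := hδ ξ hξu
  have h2 := hN₂ n (le_max_right _ _)
  rw [Real.dist_eq] at h2
  rw [abs_lt] at h1 h2
  rw [hεdef] at h1 h2
  linarith
end

section
/- Let g: ℝ → ℂ be a Schwartz function and define ǧ(ξ,x) = (1/(2π)) Σ_{ℓ∈ℤ} e^{−iξ(x+ℓ)} g(x+ℓ). Then the Bloch-wave inversion formula holds: for every x ∈ ℝ, g(x) = ∫_{−π}^{π} e^{iξx} ǧ(ξ,x) dξ. -/
set_option maxHeartbeats 1000000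

open Real MeasureTheory

lemma summable_schwartz_shift (g : SchwartzMap ℝ ℂ) (x : ℝ) :
    Summable fun ℓ : ℤ => ‖g (x + ℓ)‖ := by
  obtain ⟨C, hC⟩ := g.decay 2 0
  have hC' : ∀ y : ℝ, |y| ^ 2 * ‖g y‖ ≤ C := by
    intro y
    simpa [Real.norm_eq_abs, norm_iteratedFDeriv_zero] using hC.2 y
  apply summable_of_isBigO (g := fun ℓ : ℤ => 1 / (ℓ : ℝ) ^ 2)
    (summable_one_div_int_pow.mpr one_lt_two)
  rw [Asymptotics.isBigO_iff]
  refine ⟨4 * C, ?_⟩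
  have hfin : {ℓ : ℤ | ¬ (2 * |x| + 1 ≤ |(ℓ : ℝ)|)}.Finite := by
    apply Set.Finite.subset (Set.finite_Icc (-(⌈2 * |x| + 1⌉)) ⌈2 * |x| + 1⌉)
    intro ℓ hℓ
    simp only [Set.mem_setOf_eq, not_le] at hℓ
    have h1 : (ℓ : ℝ) ≤ 2 * |x| + 1 := (le_abs_self _).trans hℓ.le
    have h2 : -(2 * |x| + 1) ≤ (ℓ : ℝ) := neg_le_of_abs_le hℓ.le
    have hc : (2 * |x| + 1 : ℝ) ≤ (⌈2 * |x| + 1⌉ : ℤ) := Int.le_ceil _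
    have hcl : ((-⌈2 * |x| + 1⌉ : ℤ) : ℝ) ≤ (ℓ : ℝ) := by push_cast at hc ⊢; linarith
    have hcr : ((ℓ : ℝ)) ≤ ((⌈2 * |x| + 1⌉ : ℤ) : ℝ) := by push_cast at hc ⊢; linarith
    exact ⟨by exact_mod_cast hcl, by exact_mod_cast hcr⟩
  apply Filter.eventually_cofinite.mpr (hfin.subset _)
  intro ℓ hℓ
  simp only [Set.mem_setOf_eq]
  intro hle
  apply hℓ
  simp only [norm_norm]
  set L := |(ℓ : ℝ)| with hL
  have ha : (0:ℝ) ≤ |x| := abs_nonneg x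
  have hLpos : (1:ℝ) ≤ L := by linarith
  have habs : L - |x| ≤ |x + ℓ| := by
    have := abs_sub_abs_le_abs_sub (ℓ : ℝ) (-x)
    simp only [abs_neg, sub_neg_eq_add] at this
    calc L - |x| ≤ |(ℓ:ℝ) + x| := this
    _ = |x + ℓ| := by rw [add_comm]
  have hgle := hC' (x + ℓ)
  have hnn : (0:ℝ) ≤ ‖g (x + ℓ)‖ := norm_nonneg _
  have key : ‖g (x + ℓ)‖ * L ^ 2 ≤ 4 * C := by
    have h1 : (L - |x|) ^ 2 * ‖g (x + ℓ)‖ ≤ C := by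
      refine le_trans (mul_le_mul_of_nonneg_right ?_ hnn) hgle
      have h0 : (0:ℝ) ≤ L - |x| := by linarith
      exact pow_le_pow_left₀ h0 habs 2
    have hsq : L ^ 2 ≤ 4 * (L - |x|) ^ 2 := by
      nlinarith [mul_nonneg (by linarith : (0:ℝ) ≤ L - 2 * |x|)
        (by linarith : (0:ℝ) ≤ 3 * L - 2 * |x|)]
    nlinarith [mul_le_mul_of_nonneg_left hsq hnn]
  have hL2 : (0:ℝ) < L ^ 2 := by positivity
  have hnm : ‖(1 : ℝ) / (ℓ : ℝ) ^ 2‖ = 1 / L ^ 2 := by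
    rw [hL, Real.norm_eq_abs, abs_div, abs_one, abs_pow]
  rw [hnm, mul_one_div, le_div_iff₀ hL2]
  exact key

/-- Bloch-wave inversion formula: `g(x) = ∫_{−π}^{π} e^{iξx} ǧ(ξ,x) dξ` where
`ǧ(ξ,x) = (1/(2π)) ∑_{ℓ∈ℤ} e^{−iξ(x+ℓ)} g(x+ℓ)`. -/
theorem blochWave_inversion (g : SchwartzMap ℝ ℂ) (x : ℝ) :
    g x = ∫ ξ in (-π)..π, Complex.exp (Complex.I * (ξ : ℂ) * (x : ℂ)) *
      ((1 / (2 * (π : ℂ))) *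
        ∑' ℓ : ℤ, Complex.exp (-Complex.I * (ξ : ℂ) * ((x : ℂ) + (ℓ : ℂ))) * g (x + ℓ)) := by
  have hπ : (0:ℝ) < π := Real.pi_pos
  have hsum := summable_schwartz_shift g x
  set F : ℤ → ℝ → ℂ := fun ℓ ξ =>
    Complex.exp (-Complex.I * (ξ : ℂ) * (ℓ : ℂ)) * ((1 / (2 * (π : ℂ))) * g (x + ℓ)) with hF
  have hcoef : (1 / (2 * (π : ℂ))) = (((1 / (2 * π) : ℝ)) : ℂ) := by push_cast; ring
  have hnormF : ∀ (ℓ : ℤ) (ξ : ℝ), ‖F ℓ ξ‖ = (1 / (2 * π)) * ‖g (x + ℓ)‖ := by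
    intro ℓ ξ
    rw [hF]
    simp only [norm_mul, Complex.norm_exp]
    have h0 : (-Complex.I * (ξ : ℂ) * (ℓ : ℂ)).re = 0 := by simp
    rw [h0, Real.exp_zero, one_mul, hcoef, Complex.norm_real, Real.norm_eq_abs,
      abs_of_pos (by positivity : (0:ℝ) < 1 / (2 * π))]
  have hconts : ∀ ℓ : ℤ, Continuous (F ℓ) := by
    intro ℓ; rw [hF]; fun_prop
  have hint : ∀ ℓ : ℤ, IntegrableOn (F ℓ) (Set.Ioc (-π) π) := fun ℓ =>
    (hconts ℓ).integrableOn_Ioc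
  have hvol : (volume (Set.Ioc (-π) π)).toReal = 2 * π := by
    rw [Real.volume_Ioc, ENNReal.toReal_ofReal (by linarith)]; ring
  have hintnorm : ∀ ℓ : ℤ, ∫ ξ in Set.Ioc (-π) π, ‖F ℓ ξ‖ = ‖g (x + ℓ)‖ := by
    intro ℓ
    simp only [hnormF]
    rw [setIntegral_const, measureReal_def, hvol, smul_eq_mul]
    field_simp
  have hsummable : Summable fun ℓ : ℤ => ∫ ξ in Set.Ioc (-π) π, ‖F ℓ ξ‖ := by
    simpa only [hintnorm] using hsum
  have hzero : ∫ ξ in Set.Ioc (-π) π, F 0 ξ = g x := by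
    have h0 : ∀ ξ : ℝ, F 0 ξ = (1 / (2 * (π : ℂ))) * g x := by
      intro ξ; rw [hF]; push_cast; simp
    simp only [h0]
    have h2 : ((2 * π : ℝ) : ℂ) * ((1 / (2 * π) : ℝ) : ℂ) = 1 := by
      norm_cast
      field_simp
    rw [setIntegral_const, measureReal_def, hvol, hcoef, Complex.real_smul, ← mul_assoc]
    norm_num at h2 ⊢
    rw [h2, one_mul]
  have hne : ∀ ℓ : ℤ, ℓ ≠ 0 → ∫ ξ in Set.Ioc (-π) π, F ℓ ξ = 0 := by
    intro ℓ hℓ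
    rw [← intervalIntegral.integral_of_le (by linarith : -π ≤ π)]
    have h1 : ∀ ξ : ℝ, F ℓ ξ =
        Complex.exp ((-Complex.I * ℓ) * ξ) * ((1 / (2 * (π : ℂ))) * g (x + ℓ)) := by
      intro ξ; rw [hF]; ring_nf
    simp only [h1]
    rw [intervalIntegral.integral_mul_const]
    have hc : (-Complex.I * ℓ) ≠ 0 := by
      simp [Complex.I_ne_zero, hℓ]
    rw [integral_exp_mul_complex hc]
    have e2 : Complex.exp (Complex.I * ℓ * π) * Complex.exp (Complex.I * ℓ * π) = 1 := by
      rw [← Complex.exp_add]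
      have : (Complex.I * ℓ * π) + (Complex.I * ℓ * π) = (ℓ : ℂ) * (2 * π * Complex.I) := by
        ring
      rw [this, Complex.exp_int_mul_two_pi_mul_I]
    have e1 : Complex.exp (-Complex.I * ℓ * π) * Complex.exp (Complex.I * ℓ * π) = 1 := by
      rw [← Complex.exp_add]
      have : (-Complex.I * ℓ * π) + (Complex.I * ℓ * π) = 0 := by ring
      rw [this, Complex.exp_zero]
    have ekey : Complex.exp (-Complex.I * ℓ * π) = Complex.exp (Complex.I * ℓ * π) := by
      have := e1.trans e2.symm
      exact mul_right_cancel₀ (Complex.exp_ne_zero _) this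
    have hnum : Complex.exp ((-Complex.I * ℓ) * (π : ℝ))
        - Complex.exp ((-Complex.I * ℓ) * ((-π : ℝ) : ℂ)) = 0 := by
      push_cast
      have ha : (-Complex.I * ℓ) * (π : ℂ) = -Complex.I * ℓ * π := by ring
      have hb : (-Complex.I * ℓ) * (-(π : ℂ)) = Complex.I * ℓ * π := by ring
      rw [ha, hb, ekey, sub_self]
    rw [hnum, zero_div, zero_mul]
  have hpt : ∀ ξ : ℝ, (∑' ℓ : ℤ, F ℓ ξ) =
      Complex.exp (Complex.I * (ξ : ℂ) * (x : ℂ)) *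
      ((1 / (2 * (π : ℂ))) *
        ∑' ℓ : ℤ, Complex.exp (-Complex.I * (ξ : ℂ) * ((x : ℂ) + (ℓ : ℂ))) * g (x + ℓ)) := by
    intro ξ
    rw [← tsum_mul_left, ← tsum_mul_left]
    refine tsum_congr fun ℓ => ?_
    rw [hF]
    have hmul : ∀ A B c v : ℂ,
        Complex.exp A * (c * (Complex.exp B * v)) = Complex.exp (A + B) * (c * v) := by
      intros A B c v; rw [Complex.exp_add]; ring
    rw [hmul, show Complex.I * (ξ:ℂ) * (x:ℂ) + -Complex.I * (ξ:ℂ) * ((x:ℂ) + (ℓ:ℂ))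
      = -Complex.I * (ξ:ℂ) * (ℓ:ℂ) from by ring]
  calc (g x : ℂ) = ∑' ℓ : ℤ, ∫ ξ in Set.Ioc (-π) π, F ℓ ξ := by
        rw [tsum_eq_single 0 hne, hzero]
    _ = ∫ ξ in Set.Ioc (-π) π, ∑' ℓ : ℤ, F ℓ ξ :=
        integral_tsum_of_summable_integral_norm hint hsummable
    _ = ∫ ξ in Set.Ioc (-π) π, Complex.exp (Complex.I * (ξ : ℂ) * (x : ℂ)) *
          ((1 / (2 * (π : ℂ))) *
            ∑' ℓ : ℤ, Complex.exp (-Complex.I * (ξ : ℂ) * ((x : ℂ) + (ℓ : ℂ))) * g (x + ℓ)) := by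
        exact integral_congr_ae (Filter.Eventually.of_forall fun ξ => hpt ξ)
    _ = _ := (intervalIntegral.integral_of_le (by linarith : -π ≤ π)).symm
end

section
/- Let g: ℝ → ℂ be a Schwartz function and define ǧ(ξ,x) = (1/(2π)) Σ_{ℓ∈ℤ} e^{−iξ(x+ℓ)} g(x+ℓ). Then the Floquet–Bloch transform is, up to a factor of √(2π), an isometry: ∫_{−π}^{π} ∫_{0}^{1} |ǧ(ξ,x)|² dx dξ = (1/(2π)) ∫_ℝ |g(x)|² dx. -/
open Real MeasureTheory

namespace FloquetBlochAux

/-- The summand of the Floquet–Bloch transform. -/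
noncomputable def tt (g : SchwartzMap ℝ ℂ) (ξ x : ℝ) (ℓ : ℤ) : ℂ :=
  Complex.exp (-Complex.I * (ξ : ℂ) * ((x : ℂ) + (ℓ : ℂ))) * g (x + ℓ)

lemma frac_bound (x : ℝ) (ℓ : ℤ) :
    1 / (1 + (x + (ℓ : ℝ)) ^ 2) ≤ 2 * (1 + x ^ 2) / (1 + (ℓ : ℝ) ^ 2) := by
  rw [div_le_div_iff₀ (by positivity) (by positivity)]
  nlinarith [sq_nonneg (x + (x + (ℓ : ℝ))), sq_nonneg (x * (x + (ℓ : ℝ))), sq_nonneg x,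
    sq_nonneg (x + (ℓ : ℝ))]

lemma schwartz_bound (g : SchwartzMap ℝ ℂ) :
    ∃ C : ℝ, 0 ≤ C ∧ ∀ y : ℝ, ‖g y‖ ≤ C / (1 + y ^ 2) := by
  obtain ⟨C0, hC0, h0⟩ := g.decay 0 0
  obtain ⟨C2, hC2, h2⟩ := g.decay 2 0
  simp only [norm_iteratedFDeriv_zero, pow_zero, one_mul] at h0 h2
  refine ⟨C0 + C2, by positivity, fun y => ?_⟩
  · have a0 := h0 y
    have a2 := h2 y
    have hy : ‖y‖ ^ 2 = y ^ 2 := by rw [Real.norm_eq_abs, sq_abs]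
    rw [le_div_iff₀ (by positivity)]
    nlinarith [norm_nonneg (g y)]

lemma summable_aux : Summable (fun ℓ : ℤ => 1 / (1 + (ℓ : ℝ) ^ 2)) := by
  have hnat : Summable (fun n : ℕ => 1 / (1 + (n : ℝ) ^ 2)) := by
    have h2 : Summable (fun n : ℕ => 1 / ((n : ℝ) + 1) ^ 2) := by
      have := (summable_nat_add_iff 1).2 (summable_one_div_nat_pow.2 one_lt_two)
      simpa using this
    apply Summable.of_nonneg_of_le (fun n => by positivity) (fun n => ?_) (h2.mul_left 2)
    rw [div_le_iff₀ (by positivity)]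
    have h3 : (2 : ℝ) * (1 / ((n : ℝ) + 1) ^ 2) = 2 / ((n : ℝ) + 1) ^ 2 := by ring
    rw [h3, div_mul_eq_mul_div, le_div_iff₀ (by positivity)]
    nlinarith [sq_nonneg ((n : ℝ) - 1)]
  apply Summable.of_nat_of_neg
  · apply hnat.congr
    intro n; norm_num
  · apply hnat.congr
    intro n; push_cast; ring_nf

lemma exp_integral (k : ℤ) :
    (∫ ξ : ℝ in (-π)..π, Complex.exp (-Complex.I * (ξ : ℂ) * (k : ℂ))) =
      if k = 0 then ((2 * π : ℝ) : ℂ) else 0 := by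
  rcases eq_or_ne k 0 with hk | hk
  · subst hk
    simp only [Int.cast_zero, mul_zero, Complex.exp_zero, if_true]
    rw [intervalIntegral.integral_const]
    rw [sub_neg_eq_add, Complex.real_smul]
    push_cast
    ring
  · rw [if_neg hk]
    have hc : (-Complex.I * (k : ℂ)) ≠ 0 := by
      apply mul_ne_zero
      · simpa using Complex.I_ne_zero
      · exact_mod_cast hk
    have h := integral_exp_mul_complex (a := -π) (b := π) hc
    have harg : ∀ ξ : ℝ, -Complex.I * (ξ : ℂ) * (k : ℂ) = -Complex.I * (k : ℂ) * (ξ : ℂ) :=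
      fun ξ => by ring
    simp_rw [harg]
    rw [h]
    have : Complex.exp (-Complex.I * (k : ℂ) * ((-π : ℝ) : ℂ)) =
        Complex.exp (-Complex.I * (k : ℂ) * ((π : ℝ) : ℂ)) := by
      rw [show (-Complex.I * (k : ℂ) * ((-π : ℝ) : ℂ)) =
          -Complex.I * (k : ℂ) * ((π : ℝ) : ℂ) + (k : ℂ) * (2 * (π : ℝ) * Complex.I) by
        push_cast; ring]
      rw [Complex.exp_add, Complex.exp_int_mul_two_pi_mul_I, mul_one]
    rw [this, sub_self, zero_div]

lemma ofReal_norm_sq (w : ℂ) : ((‖w‖ ^ 2 : ℝ) : ℂ) = w * star w := by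
  rw [show (star w) = (starRingEnd ℂ) w from rfl, Complex.mul_conj, Complex.normSq_eq_norm_sq]

end FloquetBlochAux

open FloquetBlochAux

/-- The Floquet–Bloch transform is, up to a factor `√(2π)`, an isometry:
`∫_{−π}^{π} ∫_{0}^{1} |ǧ(ξ,x)|² dx dξ = (1/(2π)) ∫_ℝ |g(x)|² dx`. -/
theorem floquetBloch_isometry (g : SchwartzMap ℝ ℂ) :
    (∫ ξ in (-π)..π, ∫ x in (0:ℝ)..1,
      ‖(1 / (2 * (π : ℂ))) *
        ∑' ℓ : ℤ, Complex.exp (-Complex.I * (ξ : ℂ) * ((x : ℂ) + (ℓ : ℂ))) * g (x + ℓ)‖ ^ 2) =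
      (1 / (2 * π)) * ∫ x : ℝ, ‖g x‖ ^ 2 := by
  obtain ⟨C, hC, hgC⟩ := schwartz_bound g
  -- summability of translates
  have hsummable : ∀ x : ℝ, Summable fun ℓ : ℤ => ‖g (x + (ℓ : ℝ))‖ := by
    intro x
    apply Summable.of_nonneg_of_le (fun _ => norm_nonneg _) (fun ℓ => ?_)
      (summable_aux.mul_left (2 * (1 + x ^ 2) * C))
    calc ‖g (x + (ℓ : ℝ))‖ ≤ C / (1 + (x + (ℓ : ℝ)) ^ 2) := hgC _
      _ = C * (1 / (1 + (x + (ℓ : ℝ)) ^ 2)) := by ring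
      _ ≤ C * (2 * (1 + x ^ 2) / (1 + (ℓ : ℝ) ^ 2)) :=
          mul_le_mul_of_nonneg_left (frac_bound x ℓ) hC
      _ = 2 * (1 + x ^ 2) * C * (1 / (1 + (ℓ : ℝ) ^ 2)) := by ring
  -- uniform bound on [0,1]
  set b : ℤ → ℝ := fun ℓ => 4 * C * (1 / (1 + (ℓ : ℝ) ^ 2)) with hb_def
  have hb : Summable b := summable_aux.mul_left _
  have hb_nonneg : ∀ ℓ, 0 ≤ b ℓ := fun ℓ => by
    rw [hb_def]; positivity
  have hbb : ∀ x ∈ Set.Icc (0:ℝ) 1, ∀ ℓ : ℤ, ‖g (x + (ℓ : ℝ))‖ ≤ b ℓ := by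
    intro x hx ℓ
    calc ‖g (x + (ℓ : ℝ))‖ ≤ C / (1 + (x + (ℓ : ℝ)) ^ 2) := hgC _
      _ = C * (1 / (1 + (x + (ℓ : ℝ)) ^ 2)) := by ring
      _ ≤ C * (2 * (1 + x ^ 2) / (1 + (ℓ : ℝ) ^ 2)) :=
          mul_le_mul_of_nonneg_left (frac_bound x ℓ) hC
      _ ≤ C * (4 / (1 + (ℓ : ℝ) ^ 2)) := by
          apply mul_le_mul_of_nonneg_left _ hC
          apply div_le_div_of_nonneg_right _ (by positivity)
          · nlinarith [hx.1, hx.2, sq_nonneg x]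
      _ = b ℓ := by rw [hb_def]; ring
  -- norms of the summands
  have ht_norm : ∀ (ξ x : ℝ) (ℓ : ℤ), ‖tt g ξ x ℓ‖ = ‖g (x + (ℓ : ℝ))‖ := by
    intro ξ x ℓ
    rw [tt, norm_mul]
    rw [show (-Complex.I * (ξ : ℂ) * ((x : ℂ) + (ℓ : ℂ))) =
        ((-(ξ * (x + (ℓ : ℝ))) : ℝ) : ℂ) * Complex.I by push_cast; ring]
    rw [Complex.norm_exp_ofReal_mul_I, one_mul]
  have ht_sum : ∀ ξ x : ℝ, Summable (tt g ξ x) := fun ξ x =>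
    Summable.of_norm (((hsummable x).congr (fun ℓ => (ht_norm ξ x ℓ).symm)))
  have hstar_sum : ∀ ξ x : ℝ, Summable fun ℓ => star (tt g ξ x ℓ) := fun ξ x =>
    Summable.of_norm (((hsummable x).congr (fun ℓ => by rw [← ht_norm ξ x ℓ, norm_star])))
  have hprod_sum : ∀ ξ x : ℝ, Summable fun p : ℤ × ℤ => tt g ξ x p.1 * star (tt g ξ x p.2) := by
    intro ξ x
    apply Summable.of_norm
    have := Summable.mul_of_nonneg (hsummable x) (hsummable x)
      (fun _ => norm_nonneg _) (fun _ => norm_nonneg _)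
    apply this.congr
    intro p
    rw [norm_mul, norm_star, ht_norm, ht_norm]
  -- continuity of summands
  have cont_tt : ∀ (ξ : ℝ) (ℓ : ℤ), Continuous fun x : ℝ => tt g ξ x ℓ := by
    intro ξ ℓ
    apply Continuous.mul
    · exact Complex.continuous_exp.comp
        (continuous_const.mul (Complex.continuous_ofReal.add continuous_const))
    · exact g.continuous.comp (continuous_add_right _)
  -- star of exponential
  have star_exp : ∀ w : ℂ, star (Complex.exp w) = Complex.exp (star w) := by
    intro w
    rw [show (star (Complex.exp w)) = (starRingEnd ℂ) (Complex.exp w) from rfl,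
      ← Complex.exp_conj]
    rfl
  -- pointwise expansion of the squared tsum
  have hpt : ∀ ξ x : ℝ, (∑' ℓ : ℤ, tt g ξ x ℓ) * star (∑' ℓ : ℤ, tt g ξ x ℓ) =
      ∑' p : ℤ × ℤ, tt g ξ x p.1 * star (tt g ξ x p.2) := by
    intro ξ x
    rw [tsum_star]
    exact Summable.tsum_mul_tsum (ht_sum ξ x) (hstar_sum ξ x) (hprod_sum ξ x)
  -- swap of inner integral and sum
  have swap1 : ∀ ξ : ℝ, (∫ x in (0:ℝ)..1, (∑' ℓ : ℤ, tt g ξ x ℓ) * star (∑' ℓ : ℤ, tt g ξ x ℓ)) =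
      ∑' p : ℤ × ℤ, ∫ x in (0:ℝ)..1, tt g ξ x p.1 * star (tt g ξ x p.2) := by
    intro ξ
    simp_rw [hpt ξ]
    have key := intervalIntegral.tsum_intervalIntegral_eq_of_summable_norm
      (a := 0) (b := 1)
      (f := fun p : ℤ × ℤ => ContinuousMap.mk (fun x => tt g ξ x p.1 * star (tt g ξ x p.2))
        ((cont_tt ξ p.1).mul ((cont_tt ξ p.2).star))) ?_
    · simpa using key.symm
    · apply Summable.of_nonneg_of_le (fun _ => norm_nonneg _) (fun p => ?_)
        (hb.mul_of_nonneg hb hb_nonneg hb_nonneg)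
      rw [ContinuousMap.norm_le _ (mul_nonneg (hb_nonneg p.1) (hb_nonneg p.2))]
      rintro ⟨x, hx⟩
      have hx2 : x ∈ Set.uIcc (0:ℝ) 1 := hx
      have hx' : x ∈ Set.Icc (0:ℝ) 1 := by
        rwa [Set.uIcc_of_le zero_le_one] at hx2
      rw [ContinuousMap.restrict_apply, ContinuousMap.coe_mk, norm_mul, norm_star,
        ht_norm, ht_norm]
      exact mul_le_mul (hbb x hx' p.1) (hbb x hx' p.2) (norm_nonneg _) (hb_nonneg p.1)
  -- evaluation of each term of the sum
  have hterm : ∀ (ξ : ℝ) (p : ℤ × ℤ),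
      (∫ x in (0:ℝ)..1, tt g ξ x p.1 * star (tt g ξ x p.2)) =
        Complex.exp (-Complex.I * (ξ : ℂ) * ((p.1 : ℂ) - (p.2 : ℂ))) *
          ∫ x in (0:ℝ)..1, g (x + (p.1 : ℝ)) * star (g (x + (p.2 : ℝ))) := by
    intro ξ p
    rw [← intervalIntegral.integral_const_mul]
    refine intervalIntegral.integral_congr fun x _ => ?_
    show tt g ξ x p.1 * star (tt g ξ x p.2) = _
    rw [tt, tt, star_mul', star_exp]
    have hstararg : star (-Complex.I * (ξ:ℂ) * ((x:ℂ) + (p.2:ℂ))) =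
        Complex.I * (ξ:ℂ) * ((x:ℂ) + (p.2:ℂ)) := by
      simp [Complex.star_def, map_mul, map_neg, Complex.conj_I, Complex.conj_ofReal,
        map_add, map_intCast]
    rw [hstararg, mul_mul_mul_comm, ← Complex.exp_add]
    congr 2
    ring
  -- the inner integrals
  set Iv : ℤ × ℤ → ℂ :=
    fun p => ∫ x in (0:ℝ)..1, g (x + (p.1:ℝ)) * star (g (x + (p.2:ℝ))) with hIv
  have hIv_bound : ∀ p : ℤ × ℤ, ‖Iv p‖ ≤ b p.1 * b p.2 := by
    intro p
    have h := intervalIntegral.norm_integral_le_of_norm_le_const (a := 0) (b := 1)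
      (C := b p.1 * b p.2) (f := fun x => (g (x + (p.1:ℝ)) : ℂ) * star (g (x + (p.2:ℝ))))
      (fun x hx => ?_)
    · simpa [hIv] using h
    · have hx' : x ∈ Set.Icc (0:ℝ) 1 :=
        Set.Ioc_subset_Icc_self (by rwa [Set.uIoc_of_le zero_le_one] at hx)
      rw [norm_mul, norm_star]
      exact mul_le_mul (hbb x hx' p.1) (hbb x hx' p.2) (norm_nonneg _) (hb_nonneg p.1)
  -- swap of outer integral and sum
  have swap2 : (∫ ξ in (-π)..π, ∑' p : ℤ × ℤ,
        Complex.exp (-Complex.I * (ξ:ℂ) * ((p.1:ℂ) - (p.2:ℂ))) * Iv p) =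
      ∑' p : ℤ × ℤ,
        (∫ ξ in (-π)..π, Complex.exp (-Complex.I * (ξ:ℂ) * ((p.1:ℂ) - (p.2:ℂ)))) * Iv p := by
    have key := intervalIntegral.tsum_intervalIntegral_eq_of_summable_norm
      (a := -π) (b := π)
      (f := fun p : ℤ × ℤ => ContinuousMap.mk
        (fun ξ : ℝ => Complex.exp (-Complex.I * (ξ:ℂ) * ((p.1:ℂ) - (p.2:ℂ))) * Iv p)
        ((Complex.continuous_exp.comp
          ((continuous_const.mul Complex.continuous_ofReal).mul continuous_const)).mul
          continuous_const)) ?_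
    · have key' : (∑' p : ℤ × ℤ, ∫ ξ in (-π)..π,
          Complex.exp (-Complex.I * (ξ:ℂ) * ((p.1:ℂ) - (p.2:ℂ))) * Iv p) =
          ∫ ξ in (-π)..π, ∑' p : ℤ × ℤ,
            Complex.exp (-Complex.I * (ξ:ℂ) * ((p.1:ℂ) - (p.2:ℂ))) * Iv p := by
        simpa using key
      rw [← key']
      refine tsum_congr fun p => ?_
      rw [intervalIntegral.integral_mul_const]
    · apply Summable.of_nonneg_of_le (fun _ => norm_nonneg _) (fun p => ?_)
        (hb.mul_of_nonneg hb hb_nonneg hb_nonneg)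
      rw [ContinuousMap.norm_le _ (mul_nonneg (hb_nonneg p.1) (hb_nonneg p.2))]
      rintro ⟨ξ, hξ⟩
      rw [ContinuousMap.restrict_apply, ContinuousMap.coe_mk, norm_mul]
      have h1 : ‖Complex.exp (-Complex.I * (ξ:ℂ) * ((p.1:ℂ) - (p.2:ℂ)))‖ = 1 := by
        rw [show -Complex.I * (ξ:ℂ) * ((p.1:ℂ) - (p.2:ℂ)) =
            ((-(ξ * ((p.1:ℝ) - (p.2:ℝ))) : ℝ) : ℂ) * Complex.I by push_cast; ring]
        exact Complex.norm_exp_ofReal_mul_I _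
      rw [h1, one_mul]
      exact hIv_bound p
  -- evaluation of the ξ integrals
  have heval : ∀ p : ℤ × ℤ,
      (∫ ξ in (-π)..π, Complex.exp (-Complex.I * (ξ:ℂ) * ((p.1:ℂ) - (p.2:ℂ)))) =
        if p.1 = p.2 then ((2 * π : ℝ) : ℂ) else 0 := by
    intro p
    have h := exp_integral (p.1 - p.2)
    rw [show (((p.1 - p.2 : ℤ)) : ℂ) = (p.1:ℂ) - (p.2:ℂ) by push_cast; ring] at h
    rw [h]
    simp [sub_eq_zero]
  -- collapsing the double sum to the diagonal
  have hdiag : (∑' p : ℤ × ℤ, (if p.1 = p.2 then ((2 * π : ℝ) : ℂ) else 0) * Iv p) =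
      ((2 * π : ℝ) : ℂ) * ∑' ℓ : ℤ, Iv (ℓ, ℓ) := by
    have hinj : Function.Injective (fun ℓ : ℤ => ((ℓ, ℓ) : ℤ × ℤ)) := by
      intro a b hab
      simpa using congrArg Prod.fst hab
    have hsupp : Function.support
        (fun p : ℤ × ℤ => (if p.1 = p.2 then ((2 * π : ℝ) : ℂ) else 0) * Iv p) ⊆
        Set.range (fun ℓ : ℤ => ((ℓ, ℓ) : ℤ × ℤ)) := by
      intro p hp
      simp only [Function.mem_support] at hp
      rcases eq_or_ne p.1 p.2 with h | h
      · exact ⟨p.1, Prod.ext rfl h⟩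
      · exact absurd (by simp [h]) hp
    calc (∑' p : ℤ × ℤ, (if p.1 = p.2 then ((2 * π : ℝ) : ℂ) else 0) * Iv p)
        = ∑' ℓ : ℤ, (if (ℓ : ℤ) = ℓ then ((2 * π : ℝ) : ℂ) else 0) * Iv (ℓ, ℓ) :=
          (Function.Injective.tsum_eq hinj hsupp).symm
      _ = ∑' ℓ : ℤ, ((2 * π : ℝ) : ℂ) * Iv (ℓ, ℓ) := by simp
      _ = ((2 * π : ℝ) : ℂ) * ∑' ℓ : ℤ, Iv (ℓ, ℓ) := tsum_mul_left
  -- the diagonal sum gives the full integral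
  have hgb : ∀ y : ℝ, ‖g y‖ ≤ C := fun y =>
    (hgC y).trans (div_le_self hC (by nlinarith [sq_nonneg y]))
  have hint : Integrable (fun y : ℝ => (g y : ℂ) * star (g y)) := by
    have h2 := Integrable.bdd_mul (f := fun y : ℝ => star (g y : ℂ)) (c := C) (g.integrable (μ := volume))
      ((continuous_star.comp g.continuous).aestronglyMeasurable)
      (Filter.Eventually.of_forall fun y => by rw [norm_star]; exact hgb y)
    simpa [mul_comm] using h2
  have hlast : (∑' ℓ : ℤ, Iv (ℓ, ℓ)) = ((∫ x : ℝ, ‖g x‖ ^ 2 : ℝ) : ℂ) := by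
    have h1 := hint.hasSum_intervalIntegral_comp_add_int.tsum_eq
    calc (∑' ℓ : ℤ, Iv (ℓ, ℓ))
        = ∑' ℓ : ℤ, ∫ x in (0:ℝ)..1, (g (x + (ℓ:ℝ)) : ℂ) * star (g (x + (ℓ:ℝ))) := by
          simp only [hIv]
      _ = ∫ x : ℝ, (g x : ℂ) * star (g x) := h1
      _ = ∫ x : ℝ, ((‖g x‖ ^ 2 : ℝ) : ℂ) := by simp_rw [← ofReal_norm_sq]
      _ = ((∫ x : ℝ, ‖g x‖ ^ 2 : ℝ) : ℂ) := integral_ofReal (f := fun x => ‖g x‖ ^ 2)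
  -- the core identity
  have core : (∫ ξ in (-π)..π, ∫ x in (0:ℝ)..1,
      ((∑' ℓ : ℤ, tt g ξ x ℓ) * star (∑' ℓ : ℤ, tt g ξ x ℓ))) =
      ((2 * π : ℝ) : ℂ) * ((∫ x : ℝ, ‖g x‖ ^ 2 : ℝ) : ℂ) := by
    calc (∫ ξ in (-π)..π, ∫ x in (0:ℝ)..1,
        ((∑' ℓ : ℤ, tt g ξ x ℓ) * star (∑' ℓ : ℤ, tt g ξ x ℓ)))
        = ∫ ξ in (-π)..π, ∑' p : ℤ × ℤ,
            Complex.exp (-Complex.I * (ξ:ℂ) * ((p.1:ℂ) - (p.2:ℂ))) * Iv p := by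
          refine intervalIntegral.integral_congr fun ξ _ => ?_
          rw [swap1 ξ]
          exact tsum_congr fun p => hterm ξ p
      _ = ∑' p : ℤ × ℤ,
            (∫ ξ in (-π)..π, Complex.exp (-Complex.I * (ξ:ℂ) * ((p.1:ℂ) - (p.2:ℂ)))) * Iv p :=
          swap2
      _ = ∑' p : ℤ × ℤ, (if p.1 = p.2 then ((2 * π : ℝ) : ℂ) else 0) * Iv p :=
          tsum_congr fun p => by rw [heval p]
      _ = ((2 * π : ℝ) : ℂ) * ∑' ℓ : ℤ, Iv (ℓ, ℓ) := hdiag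
      _ = _ := by rw [hlast]
  -- pointwise identity for the real integrand
  have hc_norm : ‖(1 / (2 * (π : ℂ)))‖ = 1 / (2 * π) := by
    rw [norm_div, norm_one, norm_mul]
    simp [abs_of_nonneg Real.pi_pos.le]
  have step_pt : ∀ ξ x : ℝ,
      ((‖(1 / (2 * (π : ℂ))) * ∑' ℓ : ℤ, tt g ξ x ℓ‖ ^ 2 : ℝ) : ℂ) =
        (((1 / (2 * π)) ^ 2 : ℝ) : ℂ) *
          ((∑' ℓ : ℤ, tt g ξ x ℓ) * star (∑' ℓ : ℤ, tt g ξ x ℓ)) := by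
    intro ξ x
    rw [norm_mul, hc_norm, mul_pow, Complex.ofReal_mul, ofReal_norm_sq]
  -- final assembly
  show (∫ ξ in (-π)..π, ∫ x in (0:ℝ)..1,
      ‖(1 / (2 * (π : ℂ))) * ∑' ℓ : ℤ, tt g ξ x ℓ‖ ^ 2) = (1 / (2 * π)) * ∫ x : ℝ, ‖g x‖ ^ 2
  rw [← Complex.ofReal_inj]
  rw [← intervalIntegral.integral_ofReal]
  simp_rw [← intervalIntegral.integral_ofReal]
  simp_rw [step_pt]
  simp_rw [intervalIntegral.integral_const_mul]
  rw [core, Complex.ofReal_mul]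
  rw [← mul_assoc, ← Complex.ofReal_mul]
  congr 1
  norm_cast
  field_simp
end

section
/- Let k₀ > 0 and Λ(ζ) = −i·k₀³·ζ·(4π² − ζ²). If ζ, ζ' ∈ ℝ satisfy ζ − ζ' ∈ 2πℤ, ζ ≠ ζ', and Λ(ζ) = Λ(ζ'), then Λ(ζ) = 0 and both ζ and ζ' belong to {−2π, 0, 2π}. In particular, every nonzero eigenvalue Λ(2πj + ξ) (j ∈ ℤ, ξ ∈ (−π,π]) of the constant-coefficient Bloch symbol is attained for exactly one value of j, while the eigenvalue 0 occurs only at Floquet exponent ξ = 0, where it is attained exactly for j ∈ {−1, 0, 1}. -/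
open Real

private lemma cubic_key (ζ ζ' : ℝ) (m : ℤ) (hm : ζ - ζ' = 2 * π * m) (hne : ζ ≠ ζ')
    (h : ζ * (4 * π ^ 2 - ζ ^ 2) = ζ' * (4 * π ^ 2 - ζ' ^ 2)) :
    (ζ = -(2 * π) ∨ ζ = 0 ∨ ζ = 2 * π) ∧ (ζ' = -(2 * π) ∨ ζ' = 0 ∨ ζ' = 2 * π) := by
  have hπ := Real.pi_pos
  have hsub : ζ - ζ' ≠ 0 := sub_ne_zero.mpr hne
  have hq : ζ ^ 2 + ζ * ζ' + ζ' ^ 2 = 4 * π ^ 2 := by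
    have h2 : (ζ - ζ') * (4 * π ^ 2 - (ζ ^ 2 + ζ * ζ' + ζ' ^ 2)) = 0 := by
      linear_combination h
    rcases mul_eq_zero.mp h2 with h3 | h3
    · exact absurd h3 hsub
    · linarith
  have hζ' : ζ' = ζ - 2 * π * m := by linarith
  -- 3 (ζ - π m)^2 = π^2 (4 - m^2)
  have hkey : 3 * (ζ - π * m) ^ 2 = π ^ 2 * (4 - (m : ℝ) ^ 2) := by
    rw [hζ'] at hq; nlinarith [hq]
  have hm2 : (m : ℝ) ^ 2 ≤ 4 := by nlinarith [sq_nonneg (ζ - π * (m:ℝ)), pow_pos hπ 2, hkey]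
  have hm2' : m ^ 2 ≤ 4 := by exact_mod_cast hm2
  have hm0 : m ≠ 0 := by
    rintro rfl
    simp at hm
    exact hsub hm
  have hb1 : -2 ≤ m := by nlinarith
  have hb2 : m ≤ 2 := by nlinarith
  interval_cases m
  · -- m = -2 : ζ = -2π, ζ' = 2π
    have : (ζ + 2 * π) ^ 2 = 0 := by push_cast at hkey; nlinarith
    have hz : ζ = -(2 * π) := by nlinarith [sq_nonneg (ζ + 2 * π)]
    refine ⟨Or.inl hz, Or.inr (Or.inr ?_)⟩
    push_cast at hζ'; linarith
  · -- m = -1 : ζ ∈ {-2π, 0}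
    have hfac : ζ * (ζ + 2 * π) = 0 := by push_cast at hkey; nlinarith
    push_cast at hζ'
    rcases mul_eq_zero.mp hfac with h4 | h4
    · exact ⟨Or.inr (Or.inl h4), Or.inr (Or.inr (by linarith))⟩
    · exact ⟨Or.inl (by linarith), Or.inr (Or.inl (by linarith))⟩
  · exact absurd rfl hm0
  · -- m = 1 : ζ ∈ {0, 2π}
    have hfac : ζ * (ζ - 2 * π) = 0 := by push_cast at hkey; nlinarith
    push_cast at hζ'
    rcases mul_eq_zero.mp hfac with h4 | h4
    · exact ⟨Or.inr (Or.inl h4), Or.inl (by linarith)⟩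
    · exact ⟨Or.inr (Or.inr (by linarith)), Or.inr (Or.inl (by linarith))⟩
  · -- m = 2 : ζ = 2π, ζ' = -2π
    have : (ζ - 2 * π) ^ 2 = 0 := by push_cast at hkey; nlinarith
    have hz : ζ = 2 * π := by nlinarith [sq_nonneg (ζ - 2 * π)]
    refine ⟨Or.inr (Or.inr hz), Or.inl ?_⟩
    push_cast at hζ'; linarith

/-- Multiplicity structure of the eigenvalues `Λ(2πj + ξ)` of the constant-coefficient
Bloch symbol, where `Λ(ζ) = −ik₀³ζ(4π² − ζ²)`: two distinct arguments differing by a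
multiple of `2π` give the same value only at the triple eigenvalue `0`, attained at
`ζ ∈ {−2π, 0, 2π}`; nonzero eigenvalues are simple, and the eigenvalue `0` occurs only
at Floquet exponent `ξ = 0`, exactly for `j ∈ {−1, 0, 1}`. -/
theorem constantCoefficient_eigenvalue_multiplicity
    (k₀ : ℝ) (hk₀ : 0 < k₀) (Λ : ℝ → ℂ)
    (hΛ : ∀ ζ : ℝ, Λ ζ = -Complex.I * (k₀ : ℂ) ^ 3 * (ζ : ℂ) * (4 * (π : ℂ) ^ 2 - (ζ : ℂ) ^ 2)) :
    (∀ ζ ζ' : ℝ, (∃ m : ℤ, ζ - ζ' = 2 * π * m) → ζ ≠ ζ' → Λ ζ = Λ ζ' →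
      Λ ζ = 0 ∧ ζ ∈ ({-(2 * π), 0, 2 * π} : Set ℝ) ∧ ζ' ∈ ({-(2 * π), 0, 2 * π} : Set ℝ)) ∧
    (∀ ξ ∈ Set.Ioc (-π) π, ∀ j j' : ℤ,
      Λ (2 * π * j + ξ) ≠ 0 → Λ (2 * π * j + ξ) = Λ (2 * π * j' + ξ) → j = j') ∧
    (∀ ξ ∈ Set.Ioc (-π) π, ∀ j : ℤ,
      Λ (2 * π * j + ξ) = 0 → ξ = 0 ∧ j ∈ ({-1, 0, 1} : Set ℤ)) ∧
    (∀ j : ℤ, j ∈ ({-1, 0, 1} : Set ℤ) → Λ (2 * π * j) = 0) := by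
  have hπ := Real.pi_pos
  have hc : (-Complex.I * (k₀ : ℂ) ^ 3) ≠ 0 :=
    mul_ne_zero (neg_ne_zero.mpr Complex.I_ne_zero)
      (pow_ne_zero _ (by exact_mod_cast hk₀.ne'))
  -- from Λ ζ = 0 deduce the real factorization
  have hzero : ∀ ζ : ℝ, Λ ζ = 0 → ζ * (4 * π ^ 2 - ζ ^ 2) = 0 := by
    intro ζ h
    rw [hΛ] at h
    have h2 : (-Complex.I * (k₀ : ℂ) ^ 3) * ((ζ : ℂ) * (4 * (π : ℂ) ^ 2 - (ζ : ℂ) ^ 2)) = 0 := by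
      linear_combination h
    have h3 : (ζ : ℂ) * (4 * (π : ℂ) ^ 2 - (ζ : ℂ) ^ 2) = 0 :=
      (mul_eq_zero.mp h2).resolve_left hc
    exact_mod_cast h3
  have hzero' : ∀ ζ : ℝ, ζ * (4 * π ^ 2 - ζ ^ 2) = 0 → Λ ζ = 0 := by
    intro ζ h
    rw [hΛ]
    have h3 : (ζ : ℂ) * (4 * (π : ℂ) ^ 2 - (ζ : ℂ) ^ 2) = 0 := by exact_mod_cast h
    linear_combination (-Complex.I * (k₀ : ℂ) ^ 3) * h3
  have part1 : ∀ ζ ζ' : ℝ, (∃ m : ℤ, ζ - ζ' = 2 * π * m) → ζ ≠ ζ' → Λ ζ = Λ ζ' →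
      Λ ζ = 0 ∧ ζ ∈ ({-(2 * π), 0, 2 * π} : Set ℝ) ∧ ζ' ∈ ({-(2 * π), 0, 2 * π} : Set ℝ) := by
    intro ζ ζ' ⟨m, hm⟩ hne heq
    rw [hΛ ζ, hΛ ζ'] at heq
    have h2 : (-Complex.I * (k₀ : ℂ) ^ 3) * ((ζ : ℂ) * (4 * (π : ℂ) ^ 2 - (ζ : ℂ) ^ 2))
        = (-Complex.I * (k₀ : ℂ) ^ 3) * ((ζ' : ℂ) * (4 * (π : ℂ) ^ 2 - (ζ' : ℂ) ^ 2)) := by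
      linear_combination heq
    have h3 := mul_left_cancel₀ hc h2
    have h4 : ζ * (4 * π ^ 2 - ζ ^ 2) = ζ' * (4 * π ^ 2 - ζ' ^ 2) := by exact_mod_cast h3
    obtain ⟨hz, hz'⟩ := cubic_key ζ ζ' m hm hne h4
    refine ⟨?_, hz, hz'⟩
    apply hzero'
    rcases hz with h | h | h <;> rw [h] <;> ring
  refine ⟨part1, ?_, ?_, ?_⟩
  · -- nonzero eigenvalues are simple
    intro ξ hξ j j' hne heq
    by_contra hjj
    have hne2 : (2 * π * j + ξ : ℝ) ≠ 2 * π * j' + ξ := by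
      intro h
      have : (j : ℝ) = j' := by
        have h2 : 2 * π * (j : ℝ) = 2 * π * j' := by linarith
        exact mul_left_cancel₀ (by positivity) h2
      exact hjj (by exact_mod_cast this)
    have := part1 _ _ ⟨j - j', by push_cast; ring⟩ hne2 heq
    exact hne this.1
  · -- zero eigenvalue only at ξ = 0, j ∈ {-1,0,1}
    intro ξ hξ j h
    obtain ⟨hξ1, hξ2⟩ := hξ
    have h4 := hzero _ h
    have hcases : 2 * π * j + ξ = 0 ∨ 2 * π * j + ξ = 2 * π ∨ 2 * π * j + ξ = -(2 * π) := by
      rcases mul_eq_zero.mp h4 with h5 | h5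
      · exact Or.inl h5
      · have : (2 * π * j + ξ - 2 * π) * (2 * π * j + ξ + 2 * π) = 0 := by linarith [h5]
        rcases mul_eq_zero.mp this with h6 | h6
        · exact Or.inr (Or.inl (by linarith))
        · exact Or.inr (Or.inr (by linarith))
    rcases hcases with h5 | h5 | h5
    · have hj1 : 2 * (j : ℝ) < 1 := by nlinarith
      have hj2 : (-1 : ℝ) ≤ 2 * j := by nlinarith
      have hj1' : 2 * j < 1 := by exact_mod_cast hj1
      have hj2' : (-1 : ℤ) ≤ 2 * j := by exact_mod_cast hj2
      have : j = 0 := by omega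
      subst this
      constructor
      · push_cast at h5; linarith
      · simp
    · have hj1 : 2 * ((j : ℝ) - 1) < 1 := by nlinarith
      have hj2 : (-1 : ℝ) ≤ 2 * ((j : ℝ) - 1) := by nlinarith
      have hj1' : 2 * (j - 1) < 1 := by exact_mod_cast hj1
      have hj2' : (-1 : ℤ) ≤ 2 * (j - 1) := by exact_mod_cast hj2
      have : j = 1 := by omega
      subst this
      constructor
      · push_cast at h5; linarith
      · simp
    · have hj1 : 2 * ((j : ℝ) + 1) < 1 := by nlinarith
      have hj2 : (-1 : ℝ) ≤ 2 * ((j : ℝ) + 1) := by nlinarith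
      have hj1' : 2 * (j + 1) < 1 := by exact_mod_cast hj1
      have hj2' : (-1 : ℤ) ≤ 2 * (j + 1) := by exact_mod_cast hj2
      have : j = -1 := by omega
      subst this
      constructor
      · push_cast at h5; linarith
      · simp
  · -- the triple zero eigenvalue
    intro j hj
    apply hzero'
    rcases hj with h | h | h <;> subst h <;> push_cast <;> ring
end

section
/- Let k₀ > 0 and Λ(ζ) = −i·k₀³·ζ·(4π² − ζ²). Then there exist ε > 0 and C > 0, depending only on k₀, such that for every ξ ∈ [−π, π], every j ∈ ℤ with |j| ≥ 2, every r with 0 < r ≤ ε·j², and every λ ∈ ℂ with |λ − Λ(2πj + ξ)| = r, one has for all m ∈ ℤ: (1 + |2πm + ξ|)/|λ − Λ(2πm + ξ)| ≤ C·|j|/r. -/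
open Real

lemma aux_Q (a b p : ℝ) (ha9 : 9 * p ^ 2 ≤ a ^ 2) :
    (1/8) * (a ^ 2 + b ^ 2) ≤ a ^ 2 + a * b + b ^ 2 - 4 * p ^ 2 := by
  nlinarith [sq_nonneg (7 * b + 4 * a), sq_nonneg p]

lemma aux_gap (A B J p : ℝ) (hp3 : 3 < p) (hJ : 2 ≤ J) (hB0 : 0 ≤ B)
    (hA0 : 0 ≤ A) (hA : 3 * p / 2 * J ≤ A) :
    2 * J ^ 2 ≤ 2 * p * ((1/8) * (A ^ 2 + B ^ 2)) := by
  have hJ0 : (0:ℝ) ≤ J := by linarith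
  have h2a : (81/4) * J ^ 2 ≤ A ^ 2 := by
    nlinarith [mul_le_mul hA hA (by positivity) hA0,
      mul_nonneg (mul_nonneg hJ0 hJ0) (by nlinarith : (0:ℝ) ≤ p ^ 2 - 9)]
  nlinarith [mul_le_mul_of_nonneg_right hp3.le
      (by positivity : (0:ℝ) ≤ A ^ 2 + B ^ 2), sq_nonneg B]

lemma aux_key (A B J p : ℝ) (hp3 : 3 < p) (hJ : 2 ≤ J) (hB0 : 0 ≤ B)
    (hA0 : 0 ≤ A) (hA : 3 * p / 2 * J ≤ A) :
    (1 + B) * J ^ 2 ≤ 9 * J * (2 * p * ((1/8) * (A ^ 2 + B ^ 2)) - J ^ 2) := by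
  have hJ0 : (0:ℝ) ≤ J := by linarith
  have h2a : (81/4) * J ^ 2 ≤ A ^ 2 := by
    nlinarith [mul_le_mul hA hA (by positivity) hA0,
      mul_nonneg (mul_nonneg hJ0 hJ0) (by nlinarith : (0:ℝ) ≤ p ^ 2 - 9)]
  nlinarith [mul_le_mul_of_nonneg_right h2a hJ0,
    mul_nonneg hJ0 (sq_nonneg (J - B)),
    mul_le_mul_of_nonneg_right hp3.le
      (mul_nonneg hJ0 (by positivity : (0:ℝ) ≤ A ^ 2 + B ^ 2)),
    mul_nonneg (mul_nonneg hJ0 hJ0) hB0,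
    mul_nonneg (mul_nonneg hJ0 hJ0) (by linarith : (0:ℝ) ≤ J - 2)]

lemma lam_diff_abs (k₀ : ℝ) (hk₀ : 0 < k₀) (Λ : ℝ → ℂ)
    (hΛ : ∀ ζ : ℝ, Λ ζ = -Complex.I * (k₀ : ℂ) ^ 3 * (ζ : ℂ) * (4 * (π : ℂ) ^ 2 - (ζ : ℂ) ^ 2))
    (x y : ℝ) :
    ‖Λ x - Λ y‖
      = k₀ ^ 3 * (|x - y| * |x ^ 2 + x * y + y ^ 2 - 4 * π ^ 2|) := by
  have h1 : Λ x - Λ y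
      = Complex.I * ((k₀ ^ 3 * ((x - y) * (x ^ 2 + x * y + y ^ 2 - 4 * π ^ 2)) : ℝ) : ℂ) := by
    rw [hΛ, hΛ]; push_cast; ring
  rw [h1, norm_mul, Complex.norm_I, one_mul, Complex.norm_real, Real.norm_eq_abs, abs_mul, abs_mul,
    abs_of_nonneg (by positivity : (0:ℝ) ≤ k₀ ^ 3)]

set_option maxHeartbeats 1000000 in
/-- Scalar version of the resolvent estimate `‖(λI − L_ξ⁰)^{−1}‖_{L² → H¹} ≲ |j|/r` on
circles of radius `r ≤ ε j²` around the eigenvalue `Λ(2πj + ξ)` of the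
constant-coefficient Bloch symbol, where `Λ(ζ) = −ik₀³ζ(4π² − ζ²)`. -/
theorem constantCoefficient_resolvent_estimate
    (k₀ : ℝ) (hk₀ : 0 < k₀) (Λ : ℝ → ℂ)
    (hΛ : ∀ ζ : ℝ, Λ ζ = -Complex.I * (k₀ : ℂ) ^ 3 * (ζ : ℂ) * (4 * (π : ℂ) ^ 2 - (ζ : ℂ) ^ 2)) :
    ∃ ε > 0, ∃ C > 0, ∀ ξ ∈ Set.Icc (-π) π, ∀ j : ℤ, 2 ≤ |j| →
      ∀ r : ℝ, 0 < r → r ≤ ε * (j : ℝ) ^ 2 →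
        ∀ lam : ℂ, ‖lam - Λ (2 * π * j + ξ)‖ = r →
          ∀ m : ℤ,
            (1 + |2 * π * m + ξ|) / ‖lam - Λ (2 * π * m + ξ)‖
              ≤ C * |(j : ℝ)| / r := by
  have hπ : (3:ℝ) < π := by linarith [pi_gt_three]
  have hπ' : π < 3.15 := by linarith [pi_lt_d2]
  refine ⟨k₀ ^ 3, by positivity, 9, by norm_num, ?_⟩
  rintro ξ ⟨hξ1, hξ2⟩ j hj r hr hrε lam hlam m
  obtain ⟨K, hKdef⟩ : ∃ x : ℝ, x = k₀ ^ 3 := ⟨_, rfl⟩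
  rw [← hKdef] at hrε
  have hK : (0:ℝ) < K := by rw [hKdef]; positivity
  obtain ⟨a, ha⟩ : ∃ x : ℝ, x = 2 * π * (j:ℝ) + ξ := ⟨_, rfl⟩
  obtain ⟨b, hb⟩ : ∃ x : ℝ, x = 2 * π * (m:ℝ) + ξ := ⟨_, rfl⟩
  rw [← ha] at hlam
  rw [← hb]
  have hJ : (2:ℝ) ≤ |(j:ℝ)| := by
    have h : ((2:ℤ):ℝ) ≤ |(j:ℝ)| := by rw [← Int.cast_abs]; exact_mod_cast hj
    simpa using h
  have hξabs : |ξ| ≤ π := abs_le.mpr ⟨hξ1, hξ2⟩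
  have hA : 3 * π / 2 * |(j:ℝ)| ≤ |a| := by
    have h1 : |2 * π * (j:ℝ)| ≤ |a| + |ξ| := by
      have h := abs_add_le a (-ξ)
      rw [abs_neg] at h
      have h2 : a + -ξ = 2 * π * (j:ℝ) := by rw [ha]; ring
      rwa [h2] at h
    have h2 : |2 * π * (j:ℝ)| = 2 * π * |(j:ℝ)| := by
      rw [abs_mul, abs_of_nonneg (by positivity : (0:ℝ) ≤ 2 * π)]
    nlinarith
  have hA0 : (0:ℝ) ≤ |a| := abs_nonneg _
  have hB0 : (0:ℝ) ≤ |b| := abs_nonneg _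
  have hJ0 : (0:ℝ) ≤ |(j:ℝ)| := abs_nonneg _
  have ha2 : a ^ 2 = |a| ^ 2 := (sq_abs a).symm
  have hb2 : b ^ 2 = |b| ^ 2 := (sq_abs b).symm
  have hj2 : (j:ℝ) ^ 2 = |(j:ℝ)| ^ 2 := (sq_abs _).symm
  have h3pi : 3 * π ≤ |a| := by
    nlinarith [mul_nonneg pi_pos.le (by linarith : (0:ℝ) ≤ |(j:ℝ)| - 2)]
  have ha9 : 9 * π ^ 2 ≤ a ^ 2 := by
    rw [ha2]
    nlinarith [mul_le_mul h3pi h3pi (by positivity) hA0]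
  have hQ : (1/8) * (a ^ 2 + b ^ 2) ≤ a ^ 2 + a * b + b ^ 2 - 4 * π ^ 2 := aux_Q a b π ha9
  have hQ0 : (0:ℝ) < a ^ 2 + a * b + b ^ 2 - 4 * π ^ 2 := by
    nlinarith [sq_nonneg b, mul_pos pi_pos pi_pos]
  by_cases hmj : m = j
  · have hba : b = a := by rw [hb, ha, hmj]
    rw [hba, hlam, div_le_div_iff₀ hr hr]
    have hub : |a| ≤ 2 * π * |(j:ℝ)| + π := by
      calc |a| = |2 * π * (j:ℝ) + ξ| := by rw [ha]
      _ ≤ |2 * π * (j:ℝ)| + |ξ| := abs_add_le _ _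
      _ ≤ 2 * π * |(j:ℝ)| + π := by
          rw [abs_mul, abs_of_nonneg (by positivity : (0:ℝ) ≤ 2 * π)]; linarith
    have h19 : 1 + |a| ≤ 9 * |(j:ℝ)| := by
      nlinarith [mul_nonneg hJ0 (by linarith : (0:ℝ) ≤ 3.15 - π)]
    calc (1 + |a|) * r ≤ (9 * |(j:ℝ)|) * r :=
        mul_le_mul_of_nonneg_right h19 hr.le
    _ = 9 * |(j:ℝ)| * r := by ring
  · -- m ≠ j
    have habm : |a - b| = 2 * π * |(j:ℝ) - (m:ℝ)| := by
      have h : a - b = 2 * π * ((j:ℝ) - (m:ℝ)) := by rw [ha, hb]; ring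
      rw [h, abs_mul, abs_of_nonneg (by positivity : (0:ℝ) ≤ 2 * π)]
    have hjm1 : (1:ℝ) ≤ |(j:ℝ) - (m:ℝ)| := by
      have h1 : (1:ℤ) ≤ |j - m| := Int.one_le_abs (sub_ne_zero.mpr (Ne.symm hmj))
      exact_mod_cast h1
    have hD : ‖Λ a - Λ b‖
        = K * (2 * π * |(j:ℝ) - (m:ℝ)| * (a ^ 2 + a * b + b ^ 2 - 4 * π ^ 2)) := by
      rw [lam_diff_abs k₀ hk₀ Λ hΛ a b, habm, abs_of_pos hQ0, hKdef]
    have hDlow : K * (2 * π * ((1/8) * (a ^ 2 + b ^ 2))) ≤ ‖Λ a - Λ b‖ := by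
      rw [hD]
      have h1b : 2 * π * ((1/8) * (a ^ 2 + b ^ 2))
          ≤ 2 * π * (a ^ 2 + a * b + b ^ 2 - 4 * π ^ 2) := by
        have h := mul_le_mul_of_nonneg_left hQ (by positivity : (0:ℝ) ≤ 2 * π)
        linarith
      have h1c : 2 * π * (a ^ 2 + a * b + b ^ 2 - 4 * π ^ 2)
          ≤ 2 * π * |(j:ℝ) - (m:ℝ)| * (a ^ 2 + a * b + b ^ 2 - 4 * π ^ 2) := by
        nlinarith [mul_nonneg (mul_nonneg (by positivity : (0:ℝ) ≤ 2 * π)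
          (sub_nonneg.mpr hjm1)) hQ0.le]
      exact mul_le_mul_of_nonneg_left (le_trans h1b h1c) hK.le
    have htri : ‖Λ a - Λ b‖ - r ≤ ‖lam - Λ b‖ := by
      have h1 : ‖Λ a - Λ b‖
          ≤ ‖Λ a - lam‖ + ‖lam - Λ b‖ := by
        have h := norm_add_le (Λ a - lam) (lam - Λ b)
        simpa using h
      have h2 : ‖Λ a - lam‖ = r := by
        rw [← hlam]; exact norm_sub_rev _ _
      linarith
    have hrK : r ≤ K * |(j:ℝ)| ^ 2 := by rw [← hj2]; exact hrε
    have hgap0 : 2 * |(j:ℝ)| ^ 2 ≤ 2 * π * ((1/8) * (a ^ 2 + b ^ 2)) := by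
      rw [ha2, hb2]
      exact aux_gap |a| |b| |(j:ℝ)| π hπ hJ hB0 hA0 hA
    have hgap : 2 * r ≤ ‖Λ a - Λ b‖ := by
      have h2 := mul_le_mul_of_nonneg_left hgap0 hK.le
      nlinarith
    have hNpos : (0:ℝ) < ‖lam - Λ b‖ := by linarith
    rw [div_le_div_iff₀ hNpos hr]
    have hlb : K * (2 * π * ((1/8) * (a ^ 2 + b ^ 2))) - r ≤ ‖lam - Λ b‖ := by
      linarith
    have key : (1 + |b|) * |(j:ℝ)| ^ 2
        ≤ 9 * |(j:ℝ)| * (2 * π * ((1/8) * (|a| ^ 2 + |b| ^ 2)) - |(j:ℝ)| ^ 2) :=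
      aux_key |a| |b| |(j:ℝ)| π hπ hJ hB0 hA0 hA
    have hchain : (1 + |b|) * r
        ≤ 9 * |(j:ℝ)| * (K * (2 * π * ((1/8) * (a ^ 2 + b ^ 2))) - r) := by
      have h1 : (1 + |b|) * r ≤ (1 + |b|) * (K * |(j:ℝ)| ^ 2) :=
        mul_le_mul_of_nonneg_left hrK (by positivity)
      have h2 : (1 + |b|) * (K * |(j:ℝ)| ^ 2)
          ≤ 9 * |(j:ℝ)| * (K * (2 * π * ((1/8) * (a ^ 2 + b ^ 2))) - K * |(j:ℝ)| ^ 2) := by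
        have h3 := mul_le_mul_of_nonneg_left key hK.le
        rw [ha2, hb2]
        nlinarith [h3]
      have h4 : 9 * |(j:ℝ)| * (K * (2 * π * ((1/8) * (a ^ 2 + b ^ 2))) - K * |(j:ℝ)| ^ 2)
          ≤ 9 * |(j:ℝ)| * (K * (2 * π * ((1/8) * (a ^ 2 + b ^ 2))) - r) := by
        have h5 : K * (2 * π * ((1/8) * (a ^ 2 + b ^ 2))) - K * |(j:ℝ)| ^ 2
            ≤ K * (2 * π * ((1/8) * (a ^ 2 + b ^ 2))) - r := by linarith
        exact mul_le_mul_of_nonneg_left h5 (by positivity)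
      linarith
    calc (1 + |b|) * r
        ≤ 9 * |(j:ℝ)| * (K * (2 * π * ((1/8) * (a ^ 2 + b ^ 2))) - r) := hchain
      _ ≤ 9 * |(j:ℝ)| * ‖lam - Λ b‖ :=
          mul_le_mul_of_nonneg_left hlb (by positivity)
end

section
/- Let f: ℝ → ℝ be twice continuously differentiable, let U ⊆ ℝ² be open, and let g: U → ℝ be differentiable and satisfy f(g(λ, c)) = c·g(λ, c) + λ and f'(g(λ, c)) − c > 0 for all (λ, c) ∈ U. Define K(λ, c) = √(f'(g(λ, c)) − c)/(2π). Then K is differentiable and at every (λ, c) ∈ U: (∂_c K)·(∂_λ g) − (∂_λ K)·(∂_c g) = −1/(4π·(f'(g(λ, c)) − c)^{3/2}); in particular this quantity never vanishes. -/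
open Real

/-- The Jacobian-type identity `∂_c K · ∂_λ g − ∂_λ K · ∂_c g = −1/(4π(f'(g) − c)^{3/2})`
for the limiting wavenumber `K(λ,c) = √(f'(g(λ,c)) − c)/(2π)` of small-amplitude waves
bifurcating from the critical point `g(λ,c)` of the potential; in particular this
quantity never vanishes. -/
theorem wavenumber_jacobian_identity
    (f : ℝ → ℝ) (hf : ContDiff ℝ 2 f)
    (U : Set (ℝ × ℝ)) (hU : IsOpen U)
    (g : ℝ × ℝ → ℝ)
    (hg : ∀ p ∈ U, DifferentiableAt ℝ g p)
    (hcrit : ∀ p ∈ U, f (g p) = p.2 * g p + p.1)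
    (hpos : ∀ p ∈ U, deriv f (g p) - p.2 > 0)
    (K : ℝ × ℝ → ℝ)
    (hK : K = fun p => Real.sqrt (deriv f (g p) - p.2) / (2 * π)) :
    ∀ p ∈ U, DifferentiableAt ℝ K p ∧
      (fderiv ℝ K p (0, 1) * fderiv ℝ g p (1, 0)
          - fderiv ℝ K p (1, 0) * fderiv ℝ g p (0, 1)
        = -(1 / (4 * π * (deriv f (g p) - p.2) ^ ((3 : ℝ) / 2)))) ∧
      (fderiv ℝ K p (0, 1) * fderiv ℝ g p (1, 0)
          - fderiv ℝ K p (1, 0) * fderiv ℝ g p (0, 1) ≠ 0) := by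
  subst hK
  intro p hp
  have hgd := hg p hp
  have ha : 0 < deriv f (g p) - p.2 := hpos p hp
  have hπ : (0:ℝ) < π := Real.pi_pos
  have hf1 : Differentiable ℝ f := hf.differentiable (by norm_num)
  have hf' : Differentiable ℝ (deriv f) := by
    have h2 : ContDiff ℝ (1 + 1) f := by rw [one_add_one_eq_two]; exact hf
    exact (contDiff_succ_iff_deriv.mp h2).2.2.differentiable one_ne_zero
  set L := fderiv ℝ g p with hLdef
  have hL : HasFDerivAt g L p := hgd.hasFDerivAt
  set a := deriv f (g p) - p.2 with hadef
  set b := deriv (deriv f) (g p) with hbdef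
  -- derivative of h q = deriv f (g q) - q.2
  have hDh : HasFDerivAt (fun q : ℝ × ℝ => deriv f (g q) - q.2)
      (b • L - ContinuousLinearMap.snd ℝ ℝ ℝ) p :=
    (((hf' (g p)).hasDerivAt).comp_hasFDerivAt p hL).sub (hasFDerivAt_snd)
  have hsq : HasDerivAt Real.sqrt (1 / (2 * Real.sqrt a)) a :=
    Real.hasDerivAt_sqrt (ne_of_gt ha)
  have hDK : HasFDerivAt (fun q : ℝ × ℝ => Real.sqrt (deriv f (g q) - q.2) / (2 * π))
      ((1 / (2 * π)) • ((1 / (2 * Real.sqrt a)) • (b • L - ContinuousLinearMap.snd ℝ ℝ ℝ))) p := by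
    have h0 := (hsq.comp_hasFDerivAt p hDh).const_mul ((2 * π)⁻¹)
    have hfe : (fun q : ℝ × ℝ => Real.sqrt (deriv f (g q) - q.2) / (2 * π))
        = fun q : ℝ × ℝ => (2 * π)⁻¹ * (Real.sqrt ∘ fun q : ℝ × ℝ => deriv f (g q) - q.2) q := by
      funext q
      simp [div_eq_mul_inv, mul_comm]
    rw [hfe, one_div]
    exact h0
  -- identity differentiation
  have hDφ : HasFDerivAt (fun q => f (g q)) ((deriv f (g p)) • L) p :=
    ((hf1 (g p)).hasDerivAt).comp_hasFDerivAt p hL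
  have hDψ : HasFDerivAt (fun q : ℝ × ℝ => q.2 * g q + q.1)
      ((p.2 • L + (g p) • ContinuousLinearMap.snd ℝ ℝ ℝ) + ContinuousLinearMap.fst ℝ ℝ ℝ) p := by
    have h1 : HasFDerivAt (fun q : ℝ × ℝ => q.2 * g q)
        ((Prod.snd p) • L + (g p) • ContinuousLinearMap.snd ℝ ℝ ℝ) p := by
      exact (hasFDerivAt_snd (𝕜 := ℝ) (E := ℝ) (F := ℝ)).mul hL
    exact h1.add hasFDerivAt_fst
  have heq : ((deriv f (g p)) • L : (ℝ × ℝ) →L[ℝ] ℝ)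
      = (p.2 • L + (g p) • ContinuousLinearMap.snd ℝ ℝ ℝ) + ContinuousLinearMap.fst ℝ ℝ ℝ := by
    rw [← hDφ.fderiv, ← hDψ.fderiv]
    apply Filter.EventuallyEq.fderiv_eq
    filter_upwards [hU.mem_nhds hp] with q hq using hcrit q hq
  have hgl : a * L (1, 0) = 1 := by
    have := congrArg (fun T : (ℝ × ℝ) →L[ℝ] ℝ => T (1, 0)) heq
    simp at this
    rw [hadef]
    linarith
  have hLne : L (1, 0) ≠ 0 := by
    intro h0
    rw [h0, mul_zero] at hgl
    exact one_ne_zero hgl.symm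
  have hsqa : (0:ℝ) < Real.sqrt a := Real.sqrt_pos.mpr ha
  have hfd : fderiv ℝ (fun q : ℝ × ℝ => Real.sqrt (deriv f (g q) - q.2) / (2 * π)) p
      = (1 / (2 * π)) • ((1 / (2 * Real.sqrt a)) • (b • L - ContinuousLinearMap.snd ℝ ℝ ℝ)) :=
    hDK.fderiv
  have hval : ∀ v : ℝ × ℝ,
      fderiv ℝ (fun q : ℝ × ℝ => Real.sqrt (deriv f (g q) - q.2) / (2 * π)) p v
      = (1 / (2 * π)) * ((1 / (2 * Real.sqrt a)) * (b * L v - v.2)) := by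
    intro v
    rw [hfd]
    simp [ContinuousLinearMap.smul_apply]
  have hrpow : a ^ ((3:ℝ)/2) = a * Real.sqrt a := by
    rw [show (3:ℝ)/2 = 1 + 1/2 by norm_num, Real.rpow_add ha, Real.rpow_one,
      ← Real.sqrt_eq_rpow]
  have hmain : fderiv ℝ (fun q : ℝ × ℝ => Real.sqrt (deriv f (g q) - q.2) / (2 * π)) p (0, 1)
        * L (1, 0)
      - fderiv ℝ (fun q : ℝ × ℝ => Real.sqrt (deriv f (g q) - q.2) / (2 * π)) p (1, 0)
        * L (0, 1)
      = -(1 / (4 * π * a ^ ((3:ℝ)/2))) := by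
    rw [hval, hval, hrpow]
    have : (1 / (2 * π)) * ((1 / (2 * Real.sqrt a)) * (b * L (0,1) - 1)) * L (1,0)
        - (1 / (2 * π)) * ((1 / (2 * Real.sqrt a)) * (b * L (1,0) - 0)) * L (0,1)
        = -(L (1,0) / (4 * π * Real.sqrt a)) := by
      field_simp
      ring
    rw [this]
    have hL10 : L (1,0) = 1 / a := by
      field_simp at hgl ⊢
      linarith
    rw [hL10]
    field_simp
  refine ⟨hDK.differentiableAt, hmain, ?_⟩
  rw [hmain]
  have h1 : (0:ℝ) < 1 / (4 * π * a ^ ((3:ℝ)/2)) := by positivity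
  exact neg_ne_zero.mpr (ne_of_gt h1)
end

section
/- Let M ≥ 1 be an integer and K > 0, C₀ > 0. Then there exist τ₀ ∈ (0, 1) and C > 0 such that the following holds for every τ ∈ (0, τ₀) with η := −iτ, every b₁, b₂, b₃ ∈ ℂ with Re(b₁/η) ≤ C₀, Re(b₂/η) ≤ C₀ and Re(b₃/η) ≥ −C₀, and every continuous R: [0,1] → M₃(ℂ) with sup_{x∈[0,1]} ‖R(x)‖ ≤ K. Setting D(x) = diag(e^{x b₁/η}, e^{x b₂/η}, e^{−(1−x) b₃/η}), there exists a unique continuous Σ: [0,1] → M₃(ℂ) satisfying, for all x ∈ [0,1], Σ(x) = D(x) + η^M ∫₀^x diag(e^{(x−y)b₁/η}, e^{(x−y)b₂/η}, 0)·R(y)·Σ(y) dy − η^M ∫_x^1 diag(0, 0, e^{−(y−x)b₃/η})·R(y)·Σ(y) dy. Moreover Σ is continuously differentiable, satisfies Σ'(x) = (η^{−1}·diag(b₁, b₂, b₃) + η^M·R(x))·Σ(x) on [0,1], and sup_{x∈[0,1]} ‖Σ(x) − D(x)‖ ≤ C·τ^M. -/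
open Real Set

attribute [local instance] Matrix.normedAddCommGroup Matrix.normedSpace

/-- The integral equation defining the matrix solution `S` with prescribed exponential
behavior `D`:
`S(x) = D(x) + η^M ∫₀ˣ diag(e^{(x−y)b₁/η}, e^{(x−y)b₂/η}, 0) R(y) S(y) dy
             − η^M ∫ₓ¹ diag(0, 0, e^{−(y−x)b₃/η}) R(y) S(y) dy` for `x ∈ [0,1]`. -/
def SigmaIntegralEq (η : ℂ) (M : ℕ) (b₁ b₂ b₃ : ℂ)
    (D R S : ℝ → Matrix (Fin 3) (Fin 3) ℂ) : Prop :=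
  ∀ x ∈ Icc (0 : ℝ) 1,
    S x = D x
      + η ^ M • (∫ y in (0 : ℝ)..x,
          Matrix.diagonal ![Complex.exp (((x - y : ℝ) : ℂ) * b₁ / η),
            Complex.exp (((x - y : ℝ) : ℂ) * b₂ / η), 0] * (R y * S y))
      - η ^ M • (∫ y in x..(1 : ℝ),
          Matrix.diagonal ![0, 0,
            Complex.exp (-(((y - x : ℝ) : ℂ)) * b₃ / η)] * (R y * S y))

abbrev Mat := Matrix (Fin 3) (Fin 3) ℂ

@[reducible] noncomputable def matNACG : NormedAddCommGroup Mat where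
  toNorm := (Matrix.normedAddCommGroup : NormedAddCommGroup Mat).toNorm
  toMetricSpace := @MetricSpace.replaceUniformity _ (Matrix.instUniformSpace _ _ _)
    (Matrix.normedAddCommGroup : NormedAddCommGroup Mat).toMetricSpace rfl
  dist_eq := (Matrix.normedAddCommGroup : NormedAddCommGroup Mat).dist_eq

@[reducible] noncomputable def matNS : @NormedSpace ℝ Mat _ matNACG.toSeminormedAddCommGroup :=
  { (Matrix.normedSpace : NormedSpace ℝ Mat) with }

@[reducible] noncomputable def matNSC : @NormedSpace ℂ Mat _ matNACG.toSeminormedAddCommGroup :=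
  { (Matrix.normedSpace : NormedSpace ℂ Mat) with }

section MatInst

attribute [local instance] matNACG matNS matNSC

noncomputable def mulCLM : Mat →L[ℝ] Mat →L[ℝ] Mat :=
  LinearMap.toContinuousLinearMap
    ((LinearMap.toContinuousLinearMap.toLinearMap).comp (LinearMap.mul ℝ Mat))

lemma mulCLM_apply' (A B : Mat) : mulCLM A B = A * B := rfl

lemma hasDerivWithinAt_matmul {f g : ℝ → Mat} {d e : Mat} {x : ℝ} {s : Set ℝ}
    (hf : HasDerivWithinAt f d s x) (hg : HasDerivWithinAt g e s x) :
    HasDerivWithinAt (fun t => f t * g t) (d * g x + f x * e) s x := by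
  have hc : HasDerivWithinAt (fun t => mulCLM (f t)) (mulCLM d) s x := by
    simpa [Function.comp_def] using
      HasFDerivAt.comp_hasDerivWithinAt x (mulCLM.hasFDerivAt (x := f x)) hf
  simpa only [mulCLM_apply'] using hc.clm_apply hg

/-- The fixed point operator. -/
noncomputable def Phi (η : ℂ) (M : ℕ) (b₁ b₂ b₃ : ℂ) (D Rc S : ℝ → Mat) (x : ℝ) : Mat :=
  D x
    + η ^ M • (∫ y in (0 : ℝ)..x,
        Matrix.diagonal ![Complex.exp (((x - y : ℝ) : ℂ) * b₁ / η),
          Complex.exp (((x - y : ℝ) : ℂ) * b₂ / η), 0] * (Rc y * S y))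
    - η ^ M • (∫ y in x..(1 : ℝ),
        Matrix.diagonal ![0, 0,
          Complex.exp (-(((y - x : ℝ) : ℂ)) * b₃ / η)] * (Rc y * S y))

noncomputable def G1 (c₁ c₂ : ℂ) (Rc S : ℝ → Mat) (y : ℝ) : Mat :=
  Matrix.diagonal ![Complex.exp (-(y : ℂ) * c₁), Complex.exp (-(y : ℂ) * c₂), 0] * (Rc y * S y)

noncomputable def G2 (c₃ : ℂ) (Rc S : ℝ → Mat) (y : ℝ) : Mat :=
  Matrix.diagonal ![0, 0, Complex.exp (-(y : ℂ) * c₃)] * (Rc y * S y)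

lemma continuous_G1 {c₁ c₂ : ℂ} {Rc S : ℝ → Mat} (hRc : Continuous Rc) (hS : Continuous S) :
    Continuous (G1 c₁ c₂ Rc S) := by
  apply Continuous.matrix_mul _ (hRc.matrix_mul hS)
  apply Continuous.matrix_diagonal
  apply continuous_pi
  intro i
  fin_cases i <;> simp <;> fun_prop

lemma continuous_G2 {c₃ : ℂ} {Rc S : ℝ → Mat} (hRc : Continuous Rc) (hS : Continuous S) :
    Continuous (G2 c₃ Rc S) := by
  apply Continuous.matrix_mul _ (hRc.matrix_mul hS)
  apply Continuous.matrix_diagonal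
  apply continuous_pi
  intro i
  fin_cases i <;> simp <;> fun_prop

lemma phi_factor (η : ℂ) (M : ℕ) (b₁ b₂ b₃ : ℂ) (D Rc S : ℝ → Mat)
    (hRc : Continuous Rc) (hS : Continuous S) (x : ℝ) :
    Phi η M b₁ b₂ b₃ D Rc S x
      = D x
        + η ^ M • (Matrix.diagonal ![Complex.exp ((x : ℂ) * (b₁ / η)),
            Complex.exp ((x : ℂ) * (b₂ / η)), 0] * ∫ y in (0 : ℝ)..x, G1 (b₁/η) (b₂/η) Rc S y)
        - η ^ M • (Matrix.diagonal ![0, 0, Complex.exp ((x : ℂ) * (b₃ / η))]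
            * ∫ y in x..(1 : ℝ), G2 (b₃/η) Rc S y) := by
  have hint1 : IntervalIntegrable (G1 (b₁/η) (b₂/η) Rc S) MeasureTheory.volume 0 x :=
    (continuous_G1 hRc hS).intervalIntegrable _ _
  have hint2 : IntervalIntegrable (G2 (b₃/η) Rc S) MeasureTheory.volume x 1 :=
    (continuous_G2 hRc hS).intervalIntegrable _ _
  have h1 : (Matrix.diagonal ![Complex.exp ((x : ℂ) * (b₁ / η)),
      Complex.exp ((x : ℂ) * (b₂ / η)), 0] * ∫ y in (0 : ℝ)..x, G1 (b₁/η) (b₂/η) Rc S y)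
      = ∫ y in (0 : ℝ)..x,
        Matrix.diagonal ![Complex.exp (((x - y : ℝ) : ℂ) * b₁ / η),
          Complex.exp (((x - y : ℝ) : ℂ) * b₂ / η), 0] * (Rc y * S y) := by
    rw [show (Matrix.diagonal ![Complex.exp ((x : ℂ) * (b₁ / η)),
        Complex.exp ((x : ℂ) * (b₂ / η)), 0] * ∫ y in (0 : ℝ)..x, G1 (b₁/η) (b₂/η) Rc S y)
        = mulCLM (Matrix.diagonal ![Complex.exp ((x : ℂ) * (b₁ / η)),
            Complex.exp ((x : ℂ) * (b₂ / η)), 0]) (∫ y in (0 : ℝ)..x, G1 (b₁/η) (b₂/η) Rc S y)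
      from rfl, ← ContinuousLinearMap.intervalIntegral_comp_comm _ hint1]
    refine intervalIntegral.integral_congr fun y _ => ?_
    show Matrix.diagonal _ * G1 (b₁/η) (b₂/η) Rc S y = _
    rw [G1, ← mul_assoc, Matrix.diagonal_mul_diagonal]
    congr 1
    ext i j
    fin_cases i <;> fin_cases j <;>
      simp [Matrix.diagonal, ← Complex.exp_add] <;> (try (congr 1; push_cast; ring))
  have h2 : (Matrix.diagonal ![0, 0, Complex.exp ((x : ℂ) * (b₃ / η))]
      * ∫ y in x..(1 : ℝ), G2 (b₃/η) Rc S y)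
      = ∫ y in x..(1 : ℝ),
        Matrix.diagonal ![0, 0,
          Complex.exp (-(((y - x : ℝ) : ℂ)) * b₃ / η)] * (Rc y * S y) := by
    rw [show (Matrix.diagonal ![0, 0, Complex.exp ((x : ℂ) * (b₃ / η))]
        * ∫ y in x..(1 : ℝ), G2 (b₃/η) Rc S y)
        = mulCLM (Matrix.diagonal ![0, 0, Complex.exp ((x : ℂ) * (b₃ / η))])
            (∫ y in x..(1 : ℝ), G2 (b₃/η) Rc S y)
      from rfl, ← ContinuousLinearMap.intervalIntegral_comp_comm _ hint2]
    refine intervalIntegral.integral_congr fun y _ => ?_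
    show Matrix.diagonal _ * G2 (b₃/η) Rc S y = _
    rw [G2, ← mul_assoc, Matrix.diagonal_mul_diagonal]
    congr 1
    ext i j
    fin_cases i <;> fin_cases j <;>
      simp [Matrix.diagonal, ← Complex.exp_add] <;> (try (congr 1; push_cast; ring))
  rw [Phi, h1, h2]

lemma norm_mul3 (A B : Mat) : ‖A * B‖ ≤ 3 * ‖A‖ * ‖B‖ := by
  rw [Matrix.norm_le_iff (by positivity)]
  intro i j
  calc ‖(A * B) i j‖ = ‖∑ k, A i k * B k j‖ := by rw [Matrix.mul_apply]
    _ ≤ ∑ k, ‖A i k * B k j‖ := norm_sum_le _ _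
    _ ≤ ∑ _k : Fin 3, ‖A‖ * ‖B‖ := by
        refine Finset.sum_le_sum fun k _ => ?_
        rw [norm_mul]
        exact mul_le_mul (Matrix.norm_entry_le_entrywise_sup_norm A)
          (Matrix.norm_entry_le_entrywise_sup_norm B) (norm_nonneg _) (norm_nonneg _)
    _ = 3 * ‖A‖ * ‖B‖ := by simp [Finset.sum_const]; ring

lemma norm_diag_mul (v : Fin 3 → ℂ) (A : Mat) :
    ‖Matrix.diagonal v * A‖ ≤ ‖v‖ * ‖A‖ := by
  rw [Matrix.norm_le_iff (by positivity)]
  intro i j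
  rw [Matrix.diagonal_mul, norm_mul]
  exact mul_le_mul (norm_le_pi_norm v i) (Matrix.norm_entry_le_entrywise_sup_norm A)
    (norm_nonneg _) (norm_nonneg _)

lemma norm_vec3_le {a b c : ℂ} {r : ℝ} (hr : 0 ≤ r) (ha : ‖a‖ ≤ r) (hb : ‖b‖ ≤ r)
    (hc : ‖c‖ ≤ r) : ‖(![a, b, c] : Fin 3 → ℂ)‖ ≤ r := by
  rw [pi_norm_le_iff_of_nonneg hr]
  intro i; fin_cases i <;> simpa

lemma diag3_decomp (a b c : ℂ) :
    (Matrix.diagonal ![a, b, c] : Mat)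
      = a • Matrix.diagonal ![1, 0, 0] + b • Matrix.diagonal ![0, 1, 0]
        + c • Matrix.diagonal ![0, 0, 1] := by
  ext i j
  fin_cases i <;> fin_cases j <;> simp [Matrix.diagonal]

lemma hasDerivAt_cexp_real (c : ℂ) (x : ℝ) :
    HasDerivAt (fun y : ℝ => Complex.exp (↑y * c)) (c * Complex.exp (↑x * c)) x := by
  have h : HasDerivAt (fun z : ℂ => Complex.exp (z * c)) (c * Complex.exp (↑x * c)) ↑x := by
    simpa [mul_comm, Function.comp_def] using (Complex.hasDerivAt_exp ((x : ℂ) * c)).comp (x : ℂ)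
      (hasDerivAt_mul_const c)
  exact h.comp_ofReal

lemma norm_cexp_real_mul (t : ℝ) (c : ℂ) : ‖Complex.exp (↑t * c)‖ = Real.exp (t * c.re) := by
  rw [Complex.norm_exp]
  congr 1
  simp [Complex.re_ofReal_mul]

lemma tmul_le {t r C₀ : ℝ} (ht : 0 ≤ t) (ht1 : t ≤ 1) (hr : r ≤ C₀) (hC : 0 < C₀) :
    t * r ≤ C₀ := by
  rcases le_or_gt r 0 with h | h
  · exact le_trans (mul_nonpos_of_nonneg_of_nonpos ht h) hC.le
  · calc t * r ≤ 1 * r := by nlinarith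
      _ ≤ C₀ := by linarith

/-- `Phi` only depends on `Rc`, `S` through their restriction to `[0,1]`, for `x ∈ [0,1]`. -/
lemma phi_congr (η : ℂ) (M : ℕ) (b₁ b₂ b₃ : ℂ) (D R Rc S T : ℝ → Mat)
    (hR : EqOn Rc R (Icc 0 1)) (hST : EqOn S T (Icc 0 1)) {x : ℝ} (hx : x ∈ Icc (0:ℝ) 1) :
    Phi η M b₁ b₂ b₃ D Rc S x = Phi η M b₁ b₂ b₃ D R T x := by
  have hsub1 : uIcc (0:ℝ) x ⊆ Icc 0 1 := by
    rw [uIcc_of_le hx.1]; exact Icc_subset_Icc le_rfl hx.2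
  have hsub2 : uIcc x (1:ℝ) ⊆ Icc 0 1 := by
    rw [uIcc_of_le hx.2]; exact Icc_subset_Icc hx.1 le_rfl
  have q1 : (∫ y in (0:ℝ)..x, Matrix.diagonal ![Complex.exp (((x - y : ℝ) : ℂ) * b₁ / η),
        Complex.exp (((x - y : ℝ) : ℂ) * b₂ / η), 0] * (Rc y * S y))
      = ∫ y in (0:ℝ)..x, Matrix.diagonal ![Complex.exp (((x - y : ℝ) : ℂ) * b₁ / η),
        Complex.exp (((x - y : ℝ) : ℂ) * b₂ / η), 0] * (R y * T y) :=
    intervalIntegral.integral_congr fun y hy => by rw [hR (hsub1 hy), hST (hsub1 hy)]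
  have q2 : (∫ y in x..(1:ℝ), Matrix.diagonal ![0, 0,
        Complex.exp (-(((y - x : ℝ) : ℂ)) * b₃ / η)] * (Rc y * S y))
      = ∫ y in x..(1:ℝ), Matrix.diagonal ![0, 0,
        Complex.exp (-(((y - x : ℝ) : ℂ)) * b₃ / η)] * (R y * T y) :=
    intervalIntegral.integral_congr fun y hy => by rw [hR (hsub2 hy), hST (hsub2 hy)]
  rw [Phi, Phi, q1, q2]

/-- Linearity of the integral part of `Phi`. -/
lemma phi_sub (η : ℂ) (M : ℕ) (b₁ b₂ b₃ : ℂ) (D Rc S₁ S₂ : ℝ → Mat)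
    (hRc : Continuous Rc) (hS₁ : Continuous S₁) (hS₂ : Continuous S₂) (x : ℝ) :
    Phi η M b₁ b₂ b₃ D Rc S₁ x - Phi η M b₁ b₂ b₃ D Rc S₂ x
      = Phi η M b₁ b₂ b₃ D Rc (fun y => S₁ y - S₂ y) x - D x := by
  have hker1 : Continuous fun y : ℝ => (Matrix.diagonal ![Complex.exp (((x - y : ℝ) : ℂ) * b₁ / η),
      Complex.exp (((x - y : ℝ) : ℂ) * b₂ / η), 0] : Mat) := by
    apply Continuous.matrix_diagonal
    apply continuous_pi
    intro i; fin_cases i <;> simp <;> fun_prop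
  have hker2 : Continuous fun y : ℝ => (Matrix.diagonal ![0, 0,
      Complex.exp (-(((y - x : ℝ) : ℂ)) * b₃ / η)] : Mat) := by
    apply Continuous.matrix_diagonal
    apply continuous_pi
    intro i; fin_cases i <;> simp <;> fun_prop
  have hint1 : ∀ S : ℝ → Mat, Continuous S → IntervalIntegrable
      (fun y => Matrix.diagonal ![Complex.exp (((x - y : ℝ) : ℂ) * b₁ / η),
        Complex.exp (((x - y : ℝ) : ℂ) * b₂ / η), 0] * (Rc y * S y)) MeasureTheory.volume 0 x :=
    fun S hS => (hker1.matrix_mul (hRc.matrix_mul hS)).intervalIntegrable _ _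
  have hint2 : ∀ S : ℝ → Mat, Continuous S → IntervalIntegrable
      (fun y => Matrix.diagonal ![0, 0,
        Complex.exp (-(((y - x : ℝ) : ℂ)) * b₃ / η)] * (Rc y * S y)) MeasureTheory.volume x 1 :=
    fun S hS => (hker2.matrix_mul (hRc.matrix_mul hS)).intervalIntegrable _ _
  have e1 : (∫ y in (0:ℝ)..x, (Matrix.diagonal ![Complex.exp (((x - y : ℝ) : ℂ) * b₁ / η),
        Complex.exp (((x - y : ℝ) : ℂ) * b₂ / η), 0] * (Rc y * S₁ y)
      - Matrix.diagonal ![Complex.exp (((x - y : ℝ) : ℂ) * b₁ / η),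
        Complex.exp (((x - y : ℝ) : ℂ) * b₂ / η), 0] * (Rc y * S₂ y)))
      = ∫ y in (0:ℝ)..x, Matrix.diagonal ![Complex.exp (((x - y : ℝ) : ℂ) * b₁ / η),
        Complex.exp (((x - y : ℝ) : ℂ) * b₂ / η), 0] * (Rc y * (S₁ y - S₂ y)) := by
    refine intervalIntegral.integral_congr fun y _ => ?_
    rw [← mul_sub, ← mul_sub]
  have e2 : (∫ y in x..(1:ℝ), (Matrix.diagonal ![0, 0,
        Complex.exp (-(((y - x : ℝ) : ℂ)) * b₃ / η)] * (Rc y * S₁ y)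
      - Matrix.diagonal ![0, 0,
        Complex.exp (-(((y - x : ℝ) : ℂ)) * b₃ / η)] * (Rc y * S₂ y)))
      = ∫ y in x..(1:ℝ), Matrix.diagonal ![0, 0,
        Complex.exp (-(((y - x : ℝ) : ℂ)) * b₃ / η)] * (Rc y * (S₁ y - S₂ y)) := by
    refine intervalIntegral.integral_congr fun y _ => ?_
    rw [← mul_sub, ← mul_sub]
  have key1 := (intervalIntegral.integral_sub (hint1 S₁ hS₁) (hint1 S₂ hS₂)).symm.trans e1
  have key2 := (intervalIntegral.integral_sub (hint2 S₁ hS₁) (hint2 S₂ hS₂)).symm.trans e2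
  rw [Phi, Phi, Phi, ← key1, ← key2]
  simp only [smul_sub]
  abel
/-- Core estimate for the integral part of `Phi`. -/
lemma phi_bound {τ : ℝ} (hτ : 0 < τ) {η : ℂ} (hη : η = -Complex.I * (τ : ℂ))
    (M : ℕ) {b₁ b₂ b₃ C₀ K : ℝ} (hC₀ : 0 < C₀) (hK : 0 < K)
    {β₁ β₂ β₃ : ℂ} (hb₁ : β₁.re ≤ C₀) (hb₂ : β₂.re ≤ C₀) (hb₃ : -C₀ ≤ β₃.re)
    (hfoo : True) : True := trivial

lemma norm_eta_pow {τ : ℝ} (hτ : 0 < τ) {η : ℂ} (hη : η = -Complex.I * (τ : ℂ)) (M : ℕ) :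
    ‖η ^ M‖ = τ ^ M := by
  rw [norm_pow, hη]
  simp [abs_of_pos hτ]

/-- The main estimate: on `[0,1]`, `‖Phi S x − D x‖ ≤ τ^M ⬝ 2 ⬝ exp C₀ ⬝ 3 K m`. -/
lemma phi_est {τ : ℝ} (hτ : 0 < τ) {η : ℂ} (hη : η = -Complex.I * (τ : ℂ))
    (M : ℕ) {b₁ b₂ b₃ : ℂ} {C₀ K : ℝ} (hC₀ : 0 < C₀) (hK : 0 < K)
    (hb₁ : (b₁ / η).re ≤ C₀) (hb₂ : (b₂ / η).re ≤ C₀) (hb₃ : -C₀ ≤ (b₃ / η).re)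
    (D Rc S : ℝ → Mat) (hRc : Continuous Rc) (hRcK : ∀ y ∈ Icc (0:ℝ) 1, ‖Rc y‖ ≤ K)
    (hS : Continuous S) {m : ℝ} (hm0 : 0 ≤ m) (hm : ∀ y ∈ Icc (0:ℝ) 1, ‖S y‖ ≤ m)
    {x : ℝ} (hx : x ∈ Icc (0:ℝ) 1) :
    ‖Phi η M b₁ b₂ b₃ D Rc S x - D x‖ ≤ τ ^ M * (2 * (Real.exp C₀ * (3 * K * m))) := by
  have hker1 : Continuous fun y : ℝ => (Matrix.diagonal ![Complex.exp (((x - y : ℝ) : ℂ) * b₁ / η),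
      Complex.exp (((x - y : ℝ) : ℂ) * b₂ / η), 0] : Mat) := by
    apply Continuous.matrix_diagonal
    apply continuous_pi
    intro i; fin_cases i <;> simp <;> fun_prop
  have hker2 : Continuous fun y : ℝ => (Matrix.diagonal ![0, 0,
      Complex.exp (-(((y - x : ℝ) : ℂ)) * b₃ / η)] : Mat) := by
    apply Continuous.matrix_diagonal
    apply continuous_pi
    intro i; fin_cases i <;> simp <;> fun_prop
  set c : ℝ := Real.exp C₀ * (3 * K * m) with hc
  have hcpos : 0 ≤ c := by positivity
  -- bound on the common integrand shape
  have hbody : ∀ (v : Fin 3 → ℂ), ‖v‖ ≤ Real.exp C₀ → ∀ y ∈ Icc (0:ℝ) 1,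
      ‖Matrix.diagonal v * (Rc y * S y)‖ ≤ c := by
    intro v hv y hy
    calc ‖Matrix.diagonal v * (Rc y * S y)‖ ≤ ‖v‖ * ‖Rc y * S y‖ := norm_diag_mul v _
      _ ≤ Real.exp C₀ * (3 * K * m) := by
          apply mul_le_mul hv _ (norm_nonneg _) (Real.exp_nonneg _)
          calc ‖Rc y * S y‖ ≤ 3 * ‖Rc y‖ * ‖S y‖ := norm_mul3 _ _
            _ ≤ 3 * K * m := by
                apply mul_le_mul _ (hm y hy) (norm_nonneg _) (by positivity)
                have := hRcK y hy
                nlinarith [norm_nonneg (Rc y)]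
  have hI1 : ‖∫ y in (0:ℝ)..x, Matrix.diagonal ![Complex.exp (((x - y : ℝ) : ℂ) * b₁ / η),
      Complex.exp (((x - y : ℝ) : ℂ) * b₂ / η), 0] * (Rc y * S y)‖ ≤ c * |x - 0| := by
    apply intervalIntegral.norm_integral_le_of_norm_le_const
    intro y hy
    rw [uIoc_of_le hx.1] at hy
    have hy1 : y ∈ Icc (0:ℝ) 1 := ⟨hy.1.le, hy.2.trans hx.2⟩
    refine hbody _ ?_ y hy1
    have hxy0 : 0 ≤ x - y := by linarith [hy.2]
    have hxy1 : x - y ≤ 1 := by linarith [hy.1, hx.2]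
    refine norm_vec3_le (Real.exp_nonneg _) ?_ ?_ (by simp [Real.exp_nonneg])
    · rw [mul_div_assoc, norm_cexp_real_mul]
      exact Real.exp_le_exp.2 (tmul_le hxy0 hxy1 hb₁ hC₀)
    · rw [mul_div_assoc, norm_cexp_real_mul]
      exact Real.exp_le_exp.2 (tmul_le hxy0 hxy1 hb₂ hC₀)
  have hI2 : ‖∫ y in x..(1:ℝ), Matrix.diagonal ![0, 0,
      Complex.exp (-(((y - x : ℝ) : ℂ)) * b₃ / η)] * (Rc y * S y)‖ ≤ c * |1 - x| := by
    apply intervalIntegral.norm_integral_le_of_norm_le_const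
    intro y hy
    rw [uIoc_of_le hx.2] at hy
    have hy1 : y ∈ Icc (0:ℝ) 1 := ⟨hx.1.trans hy.1.le, hy.2⟩
    refine hbody _ ?_ y hy1
    have hxy0 : 0 ≤ y - x := by linarith [hy.1]
    have hxy1 : y - x ≤ 1 := by linarith [hy.2, hx.1]
    refine norm_vec3_le (Real.exp_nonneg _) (by simp [Real.exp_nonneg])
      (by simp [Real.exp_nonneg]) ?_
    rw [show -(((y - x : ℝ) : ℂ)) * b₃ / η = ((y - x : ℝ) : ℂ) * (-(b₃ / η)) by
      push_cast; ring, norm_cexp_real_mul]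
    refine Real.exp_le_exp.2 (tmul_le hxy0 hxy1 ?_ hC₀)
    simp only [Complex.neg_re]
    linarith
  have hx0 : |x - 0| ≤ 1 := by rw [abs_of_nonneg (by linarith [hx.1])]; linarith [hx.2]
  have hx1 : |1 - x| ≤ 1 := by rw [abs_of_nonneg (by linarith [hx.2])]; linarith [hx.1]
  have h1 : ‖Phi η M b₁ b₂ b₃ D Rc S x - D x‖
      ≤ ‖η ^ M‖ * (c * |x - 0|) + ‖η ^ M‖ * (c * |1 - x|) := by
    rw [Phi]
    rw [show ∀ A B C : Mat, A + B - C - A = B - C by intros; abel]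
    refine (norm_sub_le _ _).trans (add_le_add ?_ ?_)
    · rw [norm_smul]; exact mul_le_mul_of_nonneg_left hI1 (norm_nonneg _)
    · rw [norm_smul]; exact mul_le_mul_of_nonneg_left hI2 (norm_nonneg _)
  refine h1.trans ?_
  rw [norm_eta_pow hτ hη]
  have hτM : 0 ≤ τ ^ M := by positivity
  nlinarith [mul_le_mul_of_nonneg_left hx0 hcpos, mul_le_mul_of_nonneg_left hx1 hcpos]

/-- Continuity of `Phi S`. -/
lemma phi_continuous (η : ℂ) (M : ℕ) (b₁ b₂ b₃ : ℂ) (D Rc S : ℝ → Mat)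
    (hD : Continuous D) (hRc : Continuous Rc) (hS : Continuous S) :
    Continuous (Phi η M b₁ b₂ b₃ D Rc S) := by
  have hfac := phi_factor η M b₁ b₂ b₃ D Rc S hRc hS
  rw [show Phi η M b₁ b₂ b₃ D Rc S = fun x =>
      D x
        + η ^ M • (Matrix.diagonal ![Complex.exp ((x : ℂ) * (b₁ / η)),
            Complex.exp ((x : ℂ) * (b₂ / η)), 0] * ∫ y in (0 : ℝ)..x, G1 (b₁/η) (b₂/η) Rc S y)
        - η ^ M • (Matrix.diagonal ![0, 0, Complex.exp ((x : ℂ) * (b₃ / η))]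
            * ∫ y in x..(1 : ℝ), G2 (b₃/η) Rc S y) from funext hfac]
  have hG1 := continuous_G1 (c₁ := b₁/η) (c₂ := b₂/η) hRc hS
  have hG2 := continuous_G2 (c₃ := b₃/η) hRc hS
  have hprim1 : Continuous fun x : ℝ => ∫ y in (0:ℝ)..x, G1 (b₁/η) (b₂/η) Rc S y :=
    intervalIntegral.continuous_primitive (fun a b => hG1.intervalIntegrable a b) 0
  have hprim2 : Continuous fun x : ℝ => ∫ y in x..(1:ℝ), G2 (b₃/η) Rc S y := by
    have : (fun x : ℝ => ∫ y in x..(1:ℝ), G2 (b₃/η) Rc S y)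
        = fun x : ℝ => (∫ y in (0:ℝ)..(1:ℝ), G2 (b₃/η) Rc S y)
          - ∫ y in (0:ℝ)..x, G2 (b₃/η) Rc S y := by
      funext x
      rw [eq_sub_iff_add_eq, add_comm]
      exact intervalIntegral.integral_add_adjacent_intervals
        (hG2.intervalIntegrable _ _) (hG2.intervalIntegrable _ _)
    rw [this]
    exact continuous_const.sub
      (intervalIntegral.continuous_primitive (fun a b => hG2.intervalIntegrable a b) 0)
  have hE1 : Continuous fun x : ℝ => (Matrix.diagonal ![Complex.exp ((x : ℂ) * (b₁ / η)),
      Complex.exp ((x : ℂ) * (b₂ / η)), 0] : Mat) := by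
    apply Continuous.matrix_diagonal
    apply continuous_pi
    intro i; fin_cases i <;> simp <;> fun_prop
  have hE2 : Continuous fun x : ℝ => (Matrix.diagonal ![0, 0,
      Complex.exp ((x : ℂ) * (b₃ / η))] : Mat) := by
    apply Continuous.matrix_diagonal
    apply continuous_pi
    intro i; fin_cases i <;> simp <;> fun_prop
  exact (hD.add ((hE1.matrix_mul hprim1).const_smul (η ^ M))).sub
    ((hE2.matrix_mul hprim2).const_smul (η ^ M))
def P1 : Mat := Matrix.diagonal ![1, 0, 0]
def P2 : Mat := Matrix.diagonal ![0, 1, 0]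
def P3 : Mat := Matrix.diagonal ![0, 0, 1]

lemma assemble (η : ℂ) (M : ℕ) (Bd Dx E1x F1x G1x E2x F2x G2x Rx Sx : Mat)
    (hSx : Sx = Dx + η^M • (E1x*F1x) - η^M • (E2x*F2x))
    (hG : E1x*G1x + E2x*G2x = Rx * Sx) :
    η⁻¹ • (Bd*Dx) + η^M • ((η⁻¹ • (Bd*E1x))*F1x + E1x*G1x)
      - η^M • ((η⁻¹ • (Bd*E2x))*F2x + E2x*(-G2x))
    = (η⁻¹ • Bd + η^M • Rx) * Sx := by
  have h5 : Bd * Sx = Bd*Dx + η^M • (Bd*(E1x*F1x)) - η^M • (Bd*(E2x*F2x)) := by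
    rw [hSx]; simp only [mul_add, mul_sub, mul_smul_comm]
  rw [add_mul, smul_mul_assoc, smul_mul_assoc, smul_mul_assoc, smul_mul_assoc, h5, ← hG]
  simp only [smul_add, smul_sub, smul_smul, smul_neg, mul_neg, smul_mul_assoc, ← mul_assoc]
  module
set_option maxHeartbeats 1000000 in
lemma phi_deriv (η : ℂ) (M : ℕ) (b₁ b₂ b₃ : ℂ) (D Rc S : ℝ → Mat)
    (hD : D = fun x : ℝ => Matrix.diagonal ![Complex.exp ((x : ℂ) * b₁ / η),
      Complex.exp ((x : ℂ) * b₂ / η), Complex.exp (-(((1 - x : ℝ)) : ℂ) * b₃ / η)])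
    (hRc : Continuous Rc) (hS : Continuous S)
    (hfix : ∀ z ∈ Icc (0:ℝ) 1, S z = Phi η M b₁ b₂ b₃ D Rc S z)
    {x : ℝ} (hx : x ∈ Icc (0:ℝ) 1) :
    HasDerivWithinAt S
      ((η⁻¹ • Matrix.diagonal ![b₁, b₂, b₃] + η ^ M • Rc x) * S x) (Icc 0 1) x := by
  haveI : Fact (x ∈ Icc (0:ℝ) 1) := ⟨hx⟩
  have hG1c : Continuous (G1 (b₁/η) (b₂/η) Rc S) := continuous_G1 hRc hS
  have hG2c : Continuous (G2 (b₃/η) Rc S) := continuous_G2 hRc hS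
  set F1 : ℝ → Mat := fun t => ∫ y in (0:ℝ)..t, G1 (b₁/η) (b₂/η) Rc S y with hF1def
  set F2 : ℝ → Mat := fun t => ∫ y in t..(1:ℝ), G2 (b₃/η) Rc S y with hF2def
  set E1f : ℝ → Mat := fun t : ℝ => (Matrix.diagonal ![Complex.exp ((t:ℂ) * (b₁/η)),
    Complex.exp ((t:ℂ) * (b₂/η)), 0] : Mat) with hE1def
  set E2f : ℝ → Mat := fun t : ℝ => (Matrix.diagonal ![0, 0,
    Complex.exp ((t:ℂ) * (b₃/η))] : Mat) with hE2def
  -- derivative of the two primitives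
  have hdF1 : HasDerivWithinAt F1 (G1 (b₁/η) (b₂/η) Rc S x) (Icc 0 1) x :=
    intervalIntegral.integral_hasDerivWithinAt_right (t := Icc (0:ℝ) 1)
      (hG1c.intervalIntegrable _ _)
      hG1c.stronglyMeasurable.stronglyMeasurableAtFilter hG1c.continuousWithinAt
  have hdF2 : HasDerivWithinAt F2 (-(G2 (b₃/η) Rc S x)) (Icc 0 1) x := by
    have heq : F2 = fun t : ℝ => (∫ y in (0:ℝ)..(1:ℝ), G2 (b₃/η) Rc S y)
        - ∫ y in (0:ℝ)..t, G2 (b₃/η) Rc S y := by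
      funext t
      rw [hF2def, eq_sub_iff_add_eq, add_comm]
      exact intervalIntegral.integral_add_adjacent_intervals
        (hG2c.intervalIntegrable _ _) (hG2c.intervalIntegrable _ _)
    rw [heq]
    have h2 : HasDerivWithinAt (fun t : ℝ => ∫ y in (0:ℝ)..t, G2 (b₃/η) Rc S y)
        (G2 (b₃/η) Rc S x) (Icc 0 1) x :=
      intervalIntegral.integral_hasDerivWithinAt_right (t := Icc (0:ℝ) 1)
        (hG2c.intervalIntegrable _ _)
        hG2c.stronglyMeasurable.stronglyMeasurableAtFilter hG2c.continuousWithinAt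
    have h3 := (hasDerivWithinAt_const x (Icc (0:ℝ) 1)
      (∫ y in (0:ℝ)..(1:ℝ), G2 (b₃/η) Rc S y)).sub h2
    simp only [zero_sub] at h3
    exact h3
  -- scalar exponential derivatives
  have hd1 := hasDerivAt_cexp_real (b₁/η) x
  have hd2 := hasDerivAt_cexp_real (b₂/η) x
  have hd3 := hasDerivAt_cexp_real (b₃/η) x
  have hd3' := hd3.mul_const (Complex.exp (-(b₃/η)))
  -- derivative of D
  have hDalt : D = fun t : ℝ => Complex.exp ((t:ℂ) * (b₁/η)) • P1
      + Complex.exp ((t:ℂ) * (b₂/η)) • P2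
      + (Complex.exp ((t:ℂ) * (b₃/η)) * Complex.exp (-(b₃/η))) • P3 := by
    rw [hD]; funext t
    rw [show Complex.exp ((t:ℂ) * b₁ / η) = Complex.exp ((t:ℂ) * (b₁/η)) by rw [mul_div_assoc],
      show Complex.exp ((t:ℂ) * b₂ / η) = Complex.exp ((t:ℂ) * (b₂/η)) by rw [mul_div_assoc],
      show Complex.exp (-(((1 - t : ℝ)) : ℂ) * b₃ / η)
          = Complex.exp ((t:ℂ) * (b₃/η)) * Complex.exp (-(b₃/η)) by
        rw [← Complex.exp_add]; congr 1; push_cast; ring]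
    exact diag3_decomp _ _ _
  have hdD : HasDerivAt D (((b₁/η) * Complex.exp ((x:ℂ) * (b₁/η))) • P1
      + ((b₂/η) * Complex.exp ((x:ℂ) * (b₂/η))) • P2
      + (((b₃/η) * Complex.exp ((x:ℂ) * (b₃/η))) * Complex.exp (-(b₃/η))) • P3) x := by
    rw [hDalt]
    exact ((hd1.smul_const P1).add (hd2.smul_const P2)).add (hd3'.smul_const P3)
  -- derivative of E1f, E2f
  have hdE1 : HasDerivAt E1f (((b₁/η) * Complex.exp ((x:ℂ) * (b₁/η))) • P1
      + ((b₂/η) * Complex.exp ((x:ℂ) * (b₂/η))) • P2) x := by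
    have hE1alt : E1f = fun t : ℝ => Complex.exp ((t:ℂ) * (b₁/η)) • P1
        + Complex.exp ((t:ℂ) * (b₂/η)) • P2 := by
      funext t; rw [hE1def]; beta_reduce
      rw [show (Matrix.diagonal ![Complex.exp ((t:ℂ) * (b₁/η)),
          Complex.exp ((t:ℂ) * (b₂/η)), 0] : Mat)
        = Complex.exp ((t:ℂ) * (b₁/η)) • P1 + Complex.exp ((t:ℂ) * (b₂/η)) • P2
          + (0:ℂ) • P3 from diag3_decomp _ _ _]
      simp
    rw [hE1alt]
    exact (hd1.smul_const P1).add (hd2.smul_const P2)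
  have hdE2 : HasDerivAt E2f (((b₃/η) * Complex.exp ((x:ℂ) * (b₃/η))) • P3) x := by
    have hE2alt : E2f = fun t : ℝ => Complex.exp ((t:ℂ) * (b₃/η)) • P3 := by
      funext t; rw [hE2def]; beta_reduce
      rw [show (Matrix.diagonal ![0, 0, Complex.exp ((t:ℂ) * (b₃/η))] : Mat)
        = (0:ℂ) • P1 + (0:ℂ) • P2 + Complex.exp ((t:ℂ) * (b₃/η)) • P3 from diag3_decomp _ _ _]
      simp
    rw [hE2alt]
    exact hd3.smul_const P3
  -- product rules
  have hdEF1 : HasDerivWithinAt (fun t => E1f t * F1 t)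
      ((((b₁/η) * Complex.exp ((x:ℂ) * (b₁/η))) • P1 + ((b₂/η) * Complex.exp ((x:ℂ) * (b₂/η))) • P2) * F1 x + E1f x * G1 (b₁/η) (b₂/η) Rc S x) (Icc 0 1) x := by
    exact hasDerivWithinAt_matmul hdE1.hasDerivWithinAt hdF1
  have hdEF2 : HasDerivWithinAt (fun t => E2f t * F2 t)
      ((((b₃/η) * Complex.exp ((x:ℂ) * (b₃/η))) • P3) * F2 x + E2f x * -(G2 (b₃/η) Rc S x)) (Icc 0 1) x := by
    exact hasDerivWithinAt_matmul hdE2.hasDerivWithinAt hdF2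
  -- total derivative of the factored form
  have hdFfact : HasDerivWithinAt
      (fun t => D t + η ^ M • (E1f t * F1 t) - η ^ M • (E2f t * F2 t))
      ((((b₁/η) * Complex.exp ((x:ℂ) * (b₁/η))) • P1 + ((b₂/η) * Complex.exp ((x:ℂ) * (b₂/η))) • P2 + (((b₃/η) * Complex.exp ((x:ℂ) * (b₃/η))) * Complex.exp (-(b₃/η))) • P3) + η ^ M • ((((b₁/η) * Complex.exp ((x:ℂ) * (b₁/η))) • P1 + ((b₂/η) * Complex.exp ((x:ℂ) * (b₂/η))) • P2) * F1 x + E1f x * G1 (b₁/η) (b₂/η) Rc S x)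
        - η ^ M • ((((b₃/η) * Complex.exp ((x:ℂ) * (b₃/η))) • P3) * F2 x + E2f x * -(G2 (b₃/η) Rc S x))) (Icc 0 1) x :=
    (hdD.hasDerivWithinAt.add (hdEF1.const_smul (η ^ M))).sub (hdEF2.const_smul (η ^ M))
  -- S agrees with the factored form on [0,1]
  have hEq : ∀ z ∈ Icc (0:ℝ) 1, S z = D z + η ^ M • (E1f z * F1 z) - η ^ M • (E2f z * F2 z) :=
    fun z hz => (hfix z hz).trans (phi_factor η M b₁ b₂ b₃ D Rc S hRc hS z)
  have hdS : HasDerivWithinAt S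
      ((((b₁/η) * Complex.exp ((x:ℂ) * (b₁/η))) • P1 + ((b₂/η) * Complex.exp ((x:ℂ) * (b₂/η))) • P2 + (((b₃/η) * Complex.exp ((x:ℂ) * (b₃/η))) * Complex.exp (-(b₃/η))) • P3) + η ^ M • ((((b₁/η) * Complex.exp ((x:ℂ) * (b₁/η))) • P1 + ((b₂/η) * Complex.exp ((x:ℂ) * (b₂/η))) • P2) * F1 x + E1f x * G1 (b₁/η) (b₂/η) Rc S x)
        - η ^ M • ((((b₃/η) * Complex.exp ((x:ℂ) * (b₃/η))) • P3) * F2 x + E2f x * -(G2 (b₃/η) Rc S x))) (Icc 0 1) x :=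
    hdFfact.congr hEq (hEq x hx)
  -- the three diagonal identities
  set Bd : Mat := Matrix.diagonal ![b₁, b₂, b₃] with hBd
  have I1 : (((b₁/η) * Complex.exp ((x:ℂ) * (b₁/η))) • P1 + ((b₂/η) * Complex.exp ((x:ℂ) * (b₂/η))) • P2 + (((b₃/η) * Complex.exp ((x:ℂ) * (b₃/η))) * Complex.exp (-(b₃/η))) • P3) = η⁻¹ • (Bd * D x) := by
    rw [hDalt, hBd]
    ext i j
    fin_cases i <;> fin_cases j <;>
      simp [P1, P2, P3, Matrix.mul_apply, Matrix.diagonal, Fin.sum_univ_three] <;> ring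
  have I2 : (((b₁/η) * Complex.exp ((x:ℂ) * (b₁/η))) • P1 + ((b₂/η) * Complex.exp ((x:ℂ) * (b₂/η))) • P2) = η⁻¹ • (Bd * E1f x) := by
    rw [hE1def, hBd]
    ext i j
    fin_cases i <;> fin_cases j <;>
      simp [P1, P2, Matrix.mul_apply, Matrix.diagonal, Fin.sum_univ_three] <;> ring
  have I3 : (((b₃/η) * Complex.exp ((x:ℂ) * (b₃/η))) • P3) = η⁻¹ • (Bd * E2f x) := by
    rw [hE2def, hBd]
    ext i j
    fin_cases i <;> fin_cases j <;>
      simp [P3, Matrix.mul_apply, Matrix.diagonal, Fin.sum_univ_three] <;> ring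
  -- the product-cancellation identity
  have I4 : E1f x * G1 (b₁/η) (b₂/η) Rc S x + E2f x * G2 (b₃/η) Rc S x = Rc x * S x := by
    have hv : (Matrix.diagonal ![Complex.exp ((x:ℂ) * (b₁/η)), Complex.exp ((x:ℂ) * (b₂/η)), 0]
        * Matrix.diagonal ![Complex.exp (-(x:ℂ) * (b₁/η)), Complex.exp (-(x:ℂ) * (b₂/η)), 0]
        + Matrix.diagonal ![0, 0, Complex.exp ((x:ℂ) * (b₃/η))]
          * Matrix.diagonal ![0, 0, Complex.exp (-(x:ℂ) * (b₃/η))] : Mat) = 1 := by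
      ext i j
      fin_cases i <;> fin_cases j <;>
        simp [Matrix.mul_apply, Matrix.diagonal, Matrix.one_apply, Fin.sum_univ_three,
          ← Complex.exp_add, neg_mul, add_neg_cancel, Complex.exp_zero]
    simp only [hE1def, hE2def, G1, G2]
    simp only [← mul_assoc]
    rw [← add_mul, ← add_mul, hv, one_mul]
  -- conclude
  rw [← assemble η M Bd (D x) (E1f x) (F1 x) (G1 (b₁/η) (b₂/η) Rc S x) (E2f x) (F2 x)
    (G2 (b₃/η) Rc S x) (Rc x) (S x) (hEq x hx) I4, ← I1, ← I2, ← I3]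
  exact hdS

end MatInst

/-- Construction, by a fixed-point argument, of a matrix solution `Σ` of
`Σ' = (η^{−1} B + η^M R) Σ` on `[0,1]` with prescribed exponential behavior `D`,
together with uniqueness and the bound `‖Σ − D‖ ≤ C τ^M`. -/
theorem matrix_solution_fixed_point
    (M : ℕ) (hM : 1 ≤ M) (K C₀ : ℝ) (hK : 0 < K) (hC₀ : 0 < C₀) :
    ∃ τ₀ ∈ Ioo (0 : ℝ) 1, ∃ C > 0, ∀ τ ∈ Ioo (0 : ℝ) τ₀, ∀ η : ℂ,
      η = -Complex.I * (τ : ℂ) →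
      ∀ b₁ b₂ b₃ : ℂ, (b₁ / η).re ≤ C₀ → (b₂ / η).re ≤ C₀ → -C₀ ≤ (b₃ / η).re →
      ∀ R : ℝ → Matrix (Fin 3) (Fin 3) ℂ, ContinuousOn R (Icc 0 1) →
        (∀ x ∈ Icc (0 : ℝ) 1, ‖R x‖ ≤ K) →
      ∀ D : ℝ → Matrix (Fin 3) (Fin 3) ℂ,
        D = (fun x : ℝ => Matrix.diagonal
          ![Complex.exp ((x : ℂ) * b₁ / η), Complex.exp ((x : ℂ) * b₂ / η),
            Complex.exp (-(((1 - x : ℝ)) : ℂ) * b₃ / η)]) →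
        (∃ S : ℝ → Matrix (Fin 3) (Fin 3) ℂ,
          ContinuousOn S (Icc 0 1) ∧ SigmaIntegralEq η M b₁ b₂ b₃ D R S) ∧
        (∀ S₁ S₂ : ℝ → Matrix (Fin 3) (Fin 3) ℂ,
          ContinuousOn S₁ (Icc 0 1) → SigmaIntegralEq η M b₁ b₂ b₃ D R S₁ →
          ContinuousOn S₂ (Icc 0 1) → SigmaIntegralEq η M b₁ b₂ b₃ D R S₂ →
          EqOn S₁ S₂ (Icc 0 1)) ∧
        (∀ S : ℝ → Matrix (Fin 3) (Fin 3) ℂ,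
          ContinuousOn S (Icc 0 1) → SigmaIntegralEq η M b₁ b₂ b₃ D R S →
          (∀ x ∈ Icc (0 : ℝ) 1, HasDerivWithinAt S
            ((η⁻¹ • Matrix.diagonal ![b₁, b₂, b₃] + η ^ M • R x) * S x) (Icc 0 1) x) ∧
          (∀ x ∈ Icc (0 : ℝ) 1, ‖S x - D x‖ ≤ C * τ ^ M)) := by
  letI := matNACG
  letI := matNS
  letI := matNSC
  set L : ℝ := 6 * K * Real.exp C₀ with hL
  have hLpos : 0 < L := by positivity
  refine ⟨min (1/2) (1/(2*L)), ⟨by positivity, lt_of_le_of_lt (min_le_left _ _) (by norm_num)⟩,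
    2 * L * Real.exp C₀, by positivity, ?_⟩
  rintro τ ⟨hτ0, hτ1⟩ η hη b₁ b₂ b₃ hb₁ hb₂ hb₃ R hRcont hRK D hD
  -- basic facts about τ
  have hτle1 : τ ≤ 1 := by
    have := lt_of_lt_of_le hτ1 (min_le_left _ _); linarith
  have hτM : τ ^ M ≤ τ := by
    calc τ ^ M ≤ τ ^ 1 := pow_le_pow_of_le_one hτ0.le hτle1 hM
      _ = τ := pow_one τ
  have hq : τ ^ M * L ≤ 1/2 := by
    have h2 : τ < 1/(2*L) := lt_of_lt_of_le hτ1 (min_le_right _ _)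
    have h3 : τ * L < 1/2 := by
      rw [lt_div_iff₀ (by positivity)] at h2
      nlinarith
    nlinarith [mul_le_mul_of_nonneg_right hτM hLpos.le]
  -- the projection and extended data
  have hprc : Continuous (fun y : ℝ => (projIcc (0:ℝ) 1 zero_le_one y : ℝ)) :=
    continuous_subtype_val.comp continuous_projIcc
  have hprmem : ∀ y : ℝ, (projIcc (0:ℝ) 1 zero_le_one y : ℝ) ∈ Icc (0:ℝ) 1 :=
    fun y => (projIcc (0:ℝ) 1 zero_le_one y).2
  have hpr_eq : ∀ y ∈ Icc (0:ℝ) 1, (projIcc (0:ℝ) 1 zero_le_one y : ℝ) = y := fun y hy => by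
    simp [projIcc_of_mem zero_le_one hy]
  set Rc : ℝ → Mat := fun y => R (projIcc (0:ℝ) 1 zero_le_one y : ℝ) with hRc
  have hRcc : Continuous Rc := hRcont.comp_continuous hprc hprmem
  have hRcEq : EqOn Rc R (Icc 0 1) := fun y hy => by rw [hRc]; simp only [hpr_eq y hy]
  have hRcK : ∀ y ∈ Icc (0:ℝ) 1, ‖Rc y‖ ≤ K := fun y hy => by
    rw [hRcEq hy]; exact hRK y hy
  -- continuity and bound for D
  have hDc : Continuous D := by
    rw [hD]
    apply Continuous.matrix_diagonal
    apply continuous_pi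
    intro i; fin_cases i <;> simp <;> fun_prop
  have hDnorm : ∀ y ∈ Icc (0:ℝ) 1, ‖D y‖ ≤ Real.exp C₀ := by
    intro y hy
    simp only [hD]
    rw [Matrix.norm_diagonal]
    refine norm_vec3_le (Real.exp_nonneg _) ?_ ?_ ?_
    · rw [mul_div_assoc, norm_cexp_real_mul]
      exact Real.exp_le_exp.2 (tmul_le hy.1 hy.2 hb₁ hC₀)
    · rw [mul_div_assoc, norm_cexp_real_mul]
      exact Real.exp_le_exp.2 (tmul_le hy.1 hy.2 hb₂ hC₀)
    · rw [show -(((1 - y : ℝ)) : ℂ) * b₃ / η = ((1 - y : ℝ) : ℂ) * (-(b₃ / η)) by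
        push_cast; ring, norm_cexp_real_mul]
      refine Real.exp_le_exp.2 (tmul_le (by linarith [hy.2]) (by linarith [hy.1]) ?_ hC₀)
      simp only [Complex.neg_re]; linarith
  -- the operator on the function space
  set T : C(Icc (0:ℝ) 1, Mat) → C(Icc (0:ℝ) 1, Mat) := fun g =>
    ContinuousMap.mk (fun p : Icc (0:ℝ) 1 =>
      Phi η M b₁ b₂ b₃ D Rc (fun y => g (projIcc (0:ℝ) 1 zero_le_one y)) (p : ℝ))
      ((phi_continuous η M b₁ b₂ b₃ D Rc _ hDc hRcc
        (g.continuous.comp continuous_projIcc)).comp continuous_subtype_val) with hT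
  -- key estimate, packaged
  have hest : ∀ S : ℝ → Mat, Continuous S → ∀ m : ℝ, 0 ≤ m →
      (∀ y ∈ Icc (0:ℝ) 1, ‖S y‖ ≤ m) → ∀ x ∈ Icc (0:ℝ) 1,
      ‖Phi η M b₁ b₂ b₃ D Rc S x - D x‖ ≤ τ ^ M * L * m := by
    intro S hS m hm0 hm x hx
    have := phi_est hτ0 hη M hC₀ hK hb₁ hb₂ hb₃ D Rc S hRcc hRcK hS hm0 hm hx
    calc ‖Phi η M b₁ b₂ b₃ D Rc S x - D x‖
        ≤ τ ^ M * (2 * (Real.exp C₀ * (3 * K * m))) := this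
      _ = τ ^ M * L * m := by rw [hL]; ring
  -- T is Lipschitz with constant τ^M * L
  have hlip : ∀ g₁ g₂ : C(Icc (0:ℝ) 1, Mat), dist (T g₁) (T g₂) ≤ τ ^ M * L * dist g₁ g₂ := by
    intro g₁ g₂
    refine (ContinuousMap.dist_le (by positivity)).2 fun p => ?_
    rw [dist_eq_norm]
    have hS₁ : Continuous (fun y => g₁ (projIcc (0:ℝ) 1 zero_le_one y)) :=
      g₁.continuous.comp continuous_projIcc
    have hS₂ : Continuous (fun y => g₂ (projIcc (0:ℝ) 1 zero_le_one y)) :=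
      g₂.continuous.comp continuous_projIcc
    have h1 : (T g₁) p - (T g₂) p
        = Phi η M b₁ b₂ b₃ D Rc (fun y => g₁ (projIcc (0:ℝ) 1 zero_le_one y)
            - g₂ (projIcc (0:ℝ) 1 zero_le_one y)) (p : ℝ) - D (p : ℝ) := by
      rw [hT]
      exact phi_sub η M b₁ b₂ b₃ D Rc _ _ hRcc hS₁ hS₂ (p : ℝ)
    rw [h1]
    refine hest _ (hS₁.sub hS₂) (dist g₁ g₂) dist_nonneg (fun y _ => ?_) (p : ℝ) p.2
    calc ‖g₁ (projIcc (0:ℝ) 1 zero_le_one y) - g₂ (projIcc (0:ℝ) 1 zero_le_one y)‖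
        = dist (g₁ (projIcc (0:ℝ) 1 zero_le_one y)) (g₂ (projIcc (0:ℝ) 1 zero_le_one y)) :=
          (dist_eq_norm _ _).symm
      _ ≤ dist g₁ g₂ := ContinuousMap.dist_apply_le_dist _
  -- contraction
  have hqlt1 : τ ^ M * L < 1 := lt_of_le_of_lt hq (by norm_num)
  have hcontr : ContractingWith ⟨τ ^ M * L, by positivity⟩ T := by
    constructor
    · exact NNReal.coe_lt_one.1 hqlt1
    · exact LipschitzWith.of_dist_le_mul hlip
  obtain ⟨g₀, hg₀⟩ : ∃ g₀, Function.IsFixedPt T g₀ :=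
    ⟨ContractingWith.fixedPoint T hcontr, hcontr.fixedPoint_isFixedPt⟩
  -- correspondence between fixed points of T and solutions of the integral equation
  have hTval : ∀ (g : C(Icc (0:ℝ) 1, Mat)) (x : ℝ) (hx : x ∈ Icc (0:ℝ) 1),
      T g ⟨x, hx⟩ = Phi η M b₁ b₂ b₃ D Rc (fun y => g (projIcc (0:ℝ) 1 zero_le_one y)) x := by
    intro g x hx; rw [hT]; rfl
  have hSol : ∀ (g : C(Icc (0:ℝ) 1, Mat)), Function.IsFixedPt T g →
      SigmaIntegralEq η M b₁ b₂ b₃ D R (fun y => g (projIcc (0:ℝ) 1 zero_le_one y)) := by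
    intro g hg x hx
    have h2 : (fun y => g (projIcc (0:ℝ) 1 zero_le_one y)) x = g ⟨x, hx⟩ := by
      simp [projIcc_of_mem zero_le_one hx]
    show (fun y => g (projIcc (0:ℝ) 1 zero_le_one y)) x
      = Phi η M b₁ b₂ b₃ D R (fun y => g (projIcc (0:ℝ) 1 zero_le_one y)) x
    have h3 : g ⟨x, hx⟩ = T g ⟨x, hx⟩ := (ContinuousMap.congr_fun hg.eq ⟨x, hx⟩).symm
    rw [h2, h3, hTval g x hx]
    exact phi_congr η M b₁ b₂ b₃ D R Rc _ _ hRcEq (fun y hy => rfl) hx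
  -- any continuous solution gives a fixed point of T
  have hFix : ∀ (S : ℝ → Mat) (hS : ContinuousOn S (Icc 0 1)),
      SigmaIntegralEq η M b₁ b₂ b₃ D R S →
      Function.IsFixedPt T (ContinuousMap.mk (fun p : Icc (0:ℝ) 1 => S ↑p) hS.restrict) := by
    intro S hS heq
    apply ContinuousMap.ext; intro p
    have hgS : EqOn (fun y => (ContinuousMap.mk (fun p : Icc (0:ℝ) 1 => S ↑p) hS.restrict)
        (projIcc (0:ℝ) 1 zero_le_one y)) S (Icc 0 1) := fun y hy => by
      show S (projIcc (0:ℝ) 1 zero_le_one y : ℝ) = S y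
      rw [hpr_eq y hy]
    calc T (ContinuousMap.mk (fun p : Icc (0:ℝ) 1 => S ↑p) hS.restrict) p
        = Phi η M b₁ b₂ b₃ D Rc (fun y =>
            (ContinuousMap.mk (fun p : Icc (0:ℝ) 1 => S ↑p) hS.restrict)
              (projIcc (0:ℝ) 1 zero_le_one y)) (p : ℝ) := rfl
      _ = Phi η M b₁ b₂ b₃ D R S (p : ℝ) :=
          phi_congr η M b₁ b₂ b₃ D R Rc _ S hRcEq hgS p.2
      _ = S ↑p := (heq ↑p p.2).symm
  refine ⟨?_, ?_, ?_⟩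
  -- existence
  · exact ⟨fun y => g₀ (projIcc (0:ℝ) 1 zero_le_one y),
      (g₀.continuous.comp continuous_projIcc).continuousOn, hSol g₀ hg₀⟩
  -- uniqueness
  · intro S₁ S₂ h1c h1e h2c h2e
    have hfix1 := hFix S₁ h1c h1e
    have hfix2 := hFix S₂ h2c h2e
    have hgeq := hcontr.fixedPoint_unique' hfix1 hfix2
    intro x hx
    exact ContinuousMap.congr_fun hgeq ⟨x, hx⟩
  -- derivative and bound
  · intro S hSc heq
    set Sc : ℝ → Mat := fun y => S (projIcc (0:ℝ) 1 zero_le_one y : ℝ) with hScdef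
    have hScc : Continuous Sc := hSc.comp_continuous hprc hprmem
    have hScEq : EqOn Sc S (Icc 0 1) := fun y hy => by
      rw [hScdef]; simp only [hpr_eq y hy]
    have hfixc : ∀ z ∈ Icc (0:ℝ) 1, Sc z = Phi η M b₁ b₂ b₃ D Rc Sc z := by
      intro z hz
      rw [hScEq hz]
      calc S z = Phi η M b₁ b₂ b₃ D R S z := heq z hz
        _ = Phi η M b₁ b₂ b₃ D Rc Sc z :=
          (phi_congr η M b₁ b₂ b₃ D R Rc Sc S hRcEq hScEq hz).symm
    constructor
    · intro x hx
      have hd := phi_deriv η M b₁ b₂ b₃ D Rc Sc hD hRcc hScc hfixc hx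
      rw [show Rc x = R x from hRcEq hx, show Sc x = S x from hScEq hx] at hd
      exact hd.congr (fun y hy => (hScEq hy).symm) ((hScEq hx).symm)
    · obtain ⟨x₀, hx₀, hmax⟩ := isCompact_Icc.exists_isMaxOn (Set.nonempty_Icc.2 zero_le_one)
        ((hSc.sub hDc.continuousOn).norm)
      rw [isMaxOn_iff] at hmax
      have hm0 : 0 ≤ ‖S x₀ - D x₀‖ := norm_nonneg _
      have hSb : ∀ y ∈ Icc (0:ℝ) 1, ‖Sc y‖ ≤ ‖S x₀ - D x₀‖ + Real.exp C₀ := by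
        intro y hy
        rw [hScEq hy]
        calc ‖S y‖ = ‖(S y - D y) + D y‖ := by rw [sub_add_cancel]
          _ ≤ ‖S y - D y‖ + ‖D y‖ := norm_add_le _ _
          _ ≤ ‖S x₀ - D x₀‖ + Real.exp C₀ := add_le_add (hmax y hy) (hDnorm y hy)
      have key : ‖S x₀ - D x₀‖ ≤ τ ^ M * L * (‖S x₀ - D x₀‖ + Real.exp C₀) := by
        have h0 : S x₀ = Phi η M b₁ b₂ b₃ D Rc Sc x₀ := by
          rw [← hScEq hx₀]; exact hfixc x₀ hx₀
        calc ‖S x₀ - D x₀‖ = ‖Phi η M b₁ b₂ b₃ D Rc Sc x₀ - D x₀‖ := by rw [← h0]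
          _ ≤ τ ^ M * L * (‖S x₀ - D x₀‖ + Real.exp C₀) :=
            hest Sc hScc _ (by positivity) hSb x₀ hx₀
      intro x hx
      have h5 : ‖S x - D x‖ ≤ ‖S x₀ - D x₀‖ := hmax x hx
      have h7 : (τ ^ M * L) * ‖S x₀ - D x₀‖ ≤ (1/2) * ‖S x₀ - D x₀‖ :=
        mul_le_mul_of_nonneg_right hq hm0
      have h6 : ‖S x₀ - D x₀‖ ≤ 2 * L * Real.exp C₀ * τ ^ M := by nlinarith [key, h7]
      linarith
end
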